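/- arXiv:1509.07843 — 8 statements merged into one kernel-verified Lean document; each statement's English description precedes it below -/
import Mathlib

section
/- The cubic polynomial P(z) = z(1+z)^2 is injective on the open ball {z ∈ ℂ : |z| < 1/3}. -/
/-- The cubic polynomial `P(z) = z * (1 + z)^2` is injective on the open ball
of radius `1/3` centered at the origin. -/
theorem cubic_injOn_ball :
    Set.InjOn (fun z : ℂ => z * (1 + z) ^ 2) (Metric.ball (0 : ℂ) (1 / 3)) := by
  intro a ha b hb h
  simp only [Metric.mem_ball, dist_zero_right] at ha hb
  simp only at h
  have key : (a - b) * ((1 + a + b) ^ 2 - a * b) = 0 := by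
    have : a * (1 + a) ^ 2 - b * (1 + b) ^ 2 = (a - b) * ((1 + a + b) ^ 2 - a * b) := by
      ring
    rw [← this, h, sub_self]
  rcases mul_eq_zero.mp key with h1 | h2
  · exact sub_eq_zero.mp h1
  · exfalso
    have hne : (1 + a + b) ^ 2 - a * b ≠ 0 := by
      have h1 : ‖(1 : ℂ) + a + b‖ ≥ 1 / 3 := by
        have := norm_add₃_le (a := (1:ℂ)) (b := a) (c := b)
        have h2 : ‖(1:ℂ)‖ ≤ ‖(1:ℂ) + a + b‖ + ‖a‖ + ‖b‖ := by
          calc ‖(1:ℂ)‖ = ‖(1 + a + b) + (-a) + (-b)‖ := by ring_nf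
            _ ≤ ‖(1:ℂ) + a + b‖ + ‖(-a : ℂ)‖ + ‖(-b : ℂ)‖ := norm_add₃_le
            _ = ‖(1:ℂ) + a + b‖ + ‖a‖ + ‖b‖ := by rw [norm_neg, norm_neg]
        simp only [norm_one] at h2
        linarith
      have hsq : ‖((1 : ℂ) + a + b) ^ 2‖ ≥ 1 / 9 := by
        rw [norm_pow]
        nlinarith [norm_nonneg ((1:ℂ) + a + b)]
      have hab : ‖a * b‖ < 1 / 9 := by
        rw [norm_mul]
        nlinarith [norm_nonneg a, norm_nonneg b]
      intro hc
      have : ((1 : ℂ) + a + b) ^ 2 = a * b := sub_eq_zero.mp hc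
      rw [this] at hsq
      linarith
    exact hne h2
end

section
/- Let n ≥ 1, let b₁, …, b_n ≥ 2 be integers and ε₁, …, ε_n ∈ {+1, −1} be signs, and assume that if b₁ = 2 and n ≥ 2 then ε₂ = +1. Then the finite signed continued fraction [⟨b_i : ε_i⟩_{i=1}^n] is well defined (all intermediate denominators are nonzero) and satisfies |[⟨b_i : ε_i⟩_{i=1}^n]| ≤ 1/2. -/
/-- The finite signed continued fraction `ε_k/(b_k + ε_{k+1}/(b_{k+1} + ⋯))`,
starting at index `k` and of length `m` (indices are 0-based). -/
noncomputable def scf (b ε : ℕ → ℤ) : ℕ → ℕ → ℝ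
  | _, 0 => 0
  | k, m + 1 => (ε k : ℝ) / ((b k : ℝ) + scf b ε (k + 1) m)

/-- The signed continued fraction starting at index `k` of length `m` is well
defined: all intermediate denominators are nonzero. -/
def scfWD (b ε : ℕ → ℤ) : ℕ → ℕ → Prop
  | _, 0 => True
  | k, m + 1 => ((b k : ℝ) + scf b ε (k + 1) m ≠ 0) ∧ scfWD b ε (k + 1) m

lemma scf_aux (b ε : ℕ → ℤ) : ∀ m k, (∀ i, k ≤ i → i < k + m → 2 ≤ b i) →
    (∀ i, k ≤ i → i < k + m → ε i = 1 ∨ ε i = -1) →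
    scfWD b ε k m ∧ |scf b ε k m| < 1 := by
  intro m
  induction m with
  | zero => intro k _ _; exact ⟨trivial, by simp [scf, scfWD]⟩
  | succ m ih =>
    intro k hb hε
    obtain ⟨wd, ht⟩ := ih (k + 1)
      (fun i h1 h2 => hb i (by omega) (by omega))
      (fun i h1 h2 => hε i (by omega) (by omega))
    have hbk : (2 : ℝ) ≤ (b k : ℝ) := by
      exact_mod_cast hb k (le_refl k) (by omega)
    set t := scf b ε (k + 1) m with htdef
    have hd : (1 : ℝ) < (b k : ℝ) + t := by
      have := abs_lt.mp ht
      linarith [this.1]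
    have hd0 : (b k : ℝ) + t ≠ 0 := by linarith
    have hεk : |(ε k : ℝ)| = 1 := by
      rcases hε k (le_refl k) (by omega) with h | h <;> simp [h]
    refine ⟨⟨hd0, wd⟩, ?_⟩
    show |(ε k : ℝ) / ((b k : ℝ) + t)| < 1
    rw [abs_div, hεk, abs_of_pos (by linarith : (0:ℝ) < (b k : ℝ) + t)]
    rw [div_lt_one (by linarith)]
    linarith

/-- A finite signed continued fraction with entries `b_i ≥ 2` and signs `±1`,
such that `ε₂ = +1` whenever `b₁ = 2` (and `n ≥ 2`), is well defined and its
value lies in `[-1/2, 1/2]`. (Indices are 0-based.) -/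
theorem scf_wellDefined_and_small (n : ℕ) (hn : 1 ≤ n) (b ε : ℕ → ℤ)
    (hb : ∀ i < n, 2 ≤ b i) (hε : ∀ i < n, ε i = 1 ∨ ε i = -1)
    (h2 : b 0 = 2 → 2 ≤ n → ε 1 = 1) :
    scfWD b ε 0 n ∧ |scf b ε 0 n| ≤ 1 / 2 := by
  obtain ⟨m, rfl⟩ : ∃ m, n = m + 1 := ⟨n - 1, by omega⟩
  have hb0 : (2 : ℝ) ≤ (b 0 : ℝ) := by exact_mod_cast hb 0 (by omega)
  have hε0 : |(ε 0 : ℝ)| = 1 := by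
    rcases hε 0 (by omega) with h | h <;> simp [h]
  cases m with
  | zero =>
    constructor
    · refine ⟨?_, trivial⟩
      have h := hb 0 (by omega)
      simp [scf]
      omega
    · show |(ε 0 : ℝ) / ((b 0 : ℝ) + scf b ε 1 0)| ≤ 1 / 2
      simp only [scf]
      rw [add_zero, abs_div, hε0, abs_of_pos (by linarith : (0:ℝ) < (b 0:ℝ))]
      rw [div_le_div_iff₀ (by linarith) (by norm_num)]
      linarith
  | succ m =>
    obtain ⟨wd1, ht⟩ := scf_aux b ε (m + 1) 1
      (fun i h1 h2 => hb i (by omega))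
      (fun i h1 h2 => hε i (by omega))
    set t := scf b ε 1 (m + 1) with htdef
    have habs := abs_lt.mp ht
    -- lower bound for t in the case b 0 = 2
    have key : (2 : ℝ) < (b 0 : ℝ) + t := by
      rcases eq_or_lt_of_le (hb 0 (by omega)) with h | h
      · -- b 0 = 2, so ε 1 = 1 and t > 0
        have hε1 : ε 1 = 1 := h2 h.symm (by omega)
        obtain ⟨_, hs⟩ := scf_aux b ε m 2
          (fun i h1 hi2 => hb i (by omega))
          (fun i h1 hi2 => hε i (by omega))
        have hb1 : (2 : ℝ) ≤ (b 1 : ℝ) := by exact_mod_cast hb 1 (by omega)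
        have hsabs := abs_lt.mp hs
        have ht0 : 0 < t := by
          rw [htdef]
          show 0 < (ε 1 : ℝ) / ((b 1 : ℝ) + scf b ε 2 m)
          rw [hε1]
          push_cast
          apply div_pos one_pos
          linarith [hsabs.1]
        have : (b 0 : ℝ) = 2 := by exact_mod_cast h.symm
        linarith
      · have : (3 : ℝ) ≤ (b 0 : ℝ) := by exact_mod_cast h
        linarith [habs.1]
    have hd : (1 : ℝ) < (b 0 : ℝ) + t := by linarith
    constructor
    · exact ⟨by linarith, wd1⟩
    · show |(ε 0 : ℝ) / ((b 0 : ℝ) + t)| ≤ 1 / 2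
      rw [abs_div, hε0, abs_of_pos (by linarith : (0:ℝ) < (b 0:ℝ) + t)]
      rw [div_le_div_iff₀ (by linarith) (by norm_num)]
      linarith
end

section
/- Let m ≥ 1, let b₁, …, b_m ≥ 2 be integers and ε₁, …, ε_m ∈ {+1, −1} be signs. For 1 ≤ k ≤ m let v_k = [⟨b_j : ε_j⟩_{j=k}^m] be the value of the tail continued fraction. Then each v_k is a well-defined nonzero rational number, and ∏_{k=1}^m |v_k| = 1/q_m, where q_m is defined by the recursion q₋₁ = 0, q₀ = 1, q_{l+1} = b_{l+1} q_l + ε_{l+1} q_{l−1} for 0 ≤ l ≤ m−1. -/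
/-- The denominators of the convergents of a signed continued fraction with
entries `b` and signs `ε` (0-based): `scfDen (l+1)` is the paper's `q_l`, with
`q_{-1} = 0`, `q₀ = 1`, `q_{l+1} = b_{l+1} q_l + ε_{l+1} q_{l-1}`. -/
def scfDen (b ε : ℕ → ℤ) : ℕ → ℤ
  | 0 => 0
  | 1 => 1
  | l + 2 => b l * scfDen b ε (l + 1) + ε l * scfDen b ε l

def cont (b ε : ℕ → ℤ) : ℕ → ℕ → ℤ
  | _, 0 => 1
  | k, 1 => b k
  | k, n + 2 => b (k + n + 1) * cont b ε k (n + 1) + ε (k + n + 1) * cont b ε k n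

lemma scfDen_eq_cont (b ε : ℕ → ℤ) : ∀ n, scfDen b ε (n + 1) = cont b ε 0 n
  | 0 => rfl
  | 1 => by simp [scfDen, cont]
  | n + 2 => by
    show b (n+1) * scfDen b ε (n+2) + ε (n+1) * scfDen b ε (n+1) = _
    rw [scfDen_eq_cont b ε (n+1), scfDen_eq_cont b ε n]
    simp [cont]

lemma cont_rev (b ε : ℕ → ℤ) : ∀ n k, cont b ε k (n + 2) =
    b k * cont b ε (k + 1) (n + 1) + ε (k + 1) * cont b ε (k + 2) n
  | 0, k => by simp [cont]; ring
  | 1, k => by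
    have i1 : k + 1 + 0 + 1 = k + 1 + 1 := by omega
    simp only [cont, i1]
    ring_nf
  | n + 2, k => by
    have h1 := cont_rev b ε (n + 1) k
    have h2 := cont_rev b ε n k
    have e1 : cont b ε k (n + 4) = b (k + n + 3) * cont b ε k (n + 3)
        + ε (k + n + 3) * cont b ε k (n + 2) := rfl
    have i2 : k + 1 + (n + 1) + 1 = k + n + 3 := by omega
    have i3 : k + 2 + n + 1 = k + n + 3 := by omega
    have e2 : cont b ε (k + 1) (n + 3) = b (k + n + 3) * cont b ε (k + 1) (n + 2)
        + ε (k + n + 3) * cont b ε (k + 1) (n + 1) := by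
      show cont b ε (k + 1) ((n + 1) + 2) = _
      simp only [cont, i2]
    have e3 : cont b ε (k + 2) (n + 2) = b (k + n + 3) * cont b ε (k + 2) (n + 1)
        + ε (k + n + 3) * cont b ε (k + 2) n := by
      simp only [cont, i3]
    rw [e1, h1, h2, e2, e3]
    ring

/-- bounds on tails: well-definedness and `|v| < 1`, and `v ≠ 0` when nonempty. -/
lemma tail_bound (b ε : ℕ → ℤ) : ∀ n k, (∀ i, k ≤ i → i < k + n → 2 ≤ b i) →
    (∀ i, k ≤ i → i < k + n → ε i = 1 ∨ ε i = -1) →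
    scfWD b ε k n ∧ |scf b ε k n| < 1 ∧ (1 ≤ n → 0 < |scf b ε k n|) := by
  intro n
  induction n with
  | zero => intro k _ _; refine ⟨trivial, by simp [scf], by omega⟩
  | succ n ih =>
    intro k hb hε
    obtain ⟨wd, hlt, -⟩ := ih (k + 1) (fun i h1 h2 => hb i (by omega) (by omega))
      (fun i h1 h2 => hε i (by omega) (by omega))
    have hbk : (2 : ℝ) ≤ (b k : ℝ) := by exact_mod_cast hb k le_rfl (by omega)
    have habs : |scf b ε (k+1) n| < 1 := hlt
    have hden : (1 : ℝ) < (b k : ℝ) + scf b ε (k + 1) n := by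
      have := abs_lt.mp habs
      linarith [this.1]
    have hden0 : (b k : ℝ) + scf b ε (k + 1) n ≠ 0 := by linarith
    have hεk : |(ε k : ℝ)| = 1 := by
      rcases hε k le_rfl (by omega) with h | h <;> simp [h]
    have hval : scf b ε k (n + 1) = (ε k : ℝ) / ((b k : ℝ) + scf b ε (k + 1) n) := rfl
    refine ⟨⟨hden0, wd⟩, ?_, ?_⟩
    · rw [hval, abs_div, hεk]
      rw [abs_of_pos (by linarith)]
      rw [div_lt_one (by linarith)]
      exact hden
    · intro _
      rw [hval, abs_div, hεk, abs_of_pos (by linarith)]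
      positivity

lemma cont_eq (b ε : ℕ → ℤ) : ∀ n k, (∀ i, k ≤ i → i < k + (n+1) → 2 ≤ b i) →
    (∀ i, k ≤ i → i < k + (n+1) → ε i = 1 ∨ ε i = -1) →
    (cont b ε k (n + 1) : ℝ) = ((b k : ℝ) + scf b ε (k + 1) n) * cont b ε (k + 1) n := by
  intro n
  induction n with
  | zero => intro k _ _; simp [cont, scf]
  | succ n ih =>
    intro k hb hε
    have ih' := ih (k + 1) (fun i h1 h2 => hb i (by omega) (by omega))
      (fun i h1 h2 => hε i (by omega) (by omega))
    obtain ⟨-, hlt, -⟩ := tail_bound b ε n (k + 2)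
      (fun i h1 h2 => hb i (by omega) (by omega))
      (fun i h1 h2 => hε i (by omega) (by omega))
    have hb1 : (2 : ℝ) ≤ (b (k+1) : ℝ) := by exact_mod_cast hb (k+1) (by omega) (by omega)
    have hden : (1 : ℝ) < (b (k+1) : ℝ) + scf b ε (k + 2) n := by
      have := abs_lt.mp hlt
      linarith [this.1]
    have hden0 : (b (k+1) : ℝ) + scf b ε (k + 2) n ≠ 0 := by linarith
    have hval : scf b ε (k+1) (n + 1) = (ε (k+1) : ℝ) / ((b (k+1) : ℝ) + scf b ε (k + 2) n) := rfl
    have hrev := cont_rev b ε n k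
    have : ((b k : ℝ) + scf b ε (k + 1) (n + 1)) * cont b ε (k + 1) (n + 1)
        = (b k : ℝ) * cont b ε (k + 1) (n + 1) + (ε (k+1) : ℝ) * cont b ε (k + 2) n := by
      rw [hval, ih', add_mul]
      congr 1
      field_simp
    rw [this]
    rw [hrev]
    push_cast
    ring

lemma cont_pos (b ε : ℕ → ℤ) : ∀ n k, (∀ i, k ≤ i → i < k + n → 2 ≤ b i) →
    (∀ i, k ≤ i → i < k + n → ε i = 1 ∨ ε i = -1) →
    (0 : ℝ) < (cont b ε k n : ℝ) := by
  intro n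
  induction n with
  | zero => intro k _ _; norm_num [cont]
  | succ n ih =>
    intro k hb hε
    rw [cont_eq b ε n k hb hε]
    have ihp := ih (k + 1) (fun i h1 h2 => hb i (by omega) (by omega))
      (fun i h1 h2 => hε i (by omega) (by omega))
    obtain ⟨-, hlt, -⟩ := tail_bound b ε n (k + 1)
      (fun i h1 h2 => hb i (by omega) (by omega))
      (fun i h1 h2 => hε i (by omega) (by omega))
    have hbk : (2 : ℝ) ≤ (b k : ℝ) := by exact_mod_cast hb k le_rfl (by omega)
    have := abs_lt.mp hlt
    have hden : (0 : ℝ) < (b k : ℝ) + scf b ε (k + 1) n := by linarith [this.1]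
    positivity

lemma scf_prod (b ε : ℕ → ℤ) : ∀ n k, (∀ i, k ≤ i → i < k + n → 2 ≤ b i) →
    (∀ i, k ≤ i → i < k + n → ε i = 1 ∨ ε i = -1) →
    (∏ j ∈ Finset.range n, |scf b ε (k + j) (n - j)|) = 1 / (cont b ε k n : ℝ) := by
  intro n
  induction n with
  | zero => intro k _ _; simp [cont]
  | succ n ih =>
    intro k hb hε
    rw [Finset.prod_range_succ']
    have hstep : ∀ j ∈ Finset.range n, |scf b ε (k + (j + 1)) (n + 1 - (j + 1))|
        = |scf b ε (k + 1 + j) (n - j)| := by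
      intro j hj
      congr 2 <;> omega
    rw [Finset.prod_congr rfl hstep]
    rw [ih (k + 1) (fun i h1 h2 => hb i (by omega) (by omega))
      (fun i h1 h2 => hε i (by omega) (by omega))]
    obtain ⟨-, hlt, -⟩ := tail_bound b ε n (k + 1)
      (fun i h1 h2 => hb i (by omega) (by omega))
      (fun i h1 h2 => hε i (by omega) (by omega))
    have hbk : (2 : ℝ) ≤ (b k : ℝ) := by exact_mod_cast hb k le_rfl (by omega)
    have habs := abs_lt.mp hlt
    have hden : (0 : ℝ) < (b k : ℝ) + scf b ε (k + 1) n := by linarith [habs.1]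
    have hεk : |(ε k : ℝ)| = 1 := by
      rcases hε k le_rfl (by omega) with h | h <;> simp [h]
    have hval : scf b ε k (n + 1) = (ε k : ℝ) / ((b k : ℝ) + scf b ε (k + 1) n) := rfl
    simp only [Nat.sub_zero, Nat.add_zero]
    rw [hval, abs_div, hεk, abs_of_pos hden,
      cont_eq b ε n k hb hε]
    have hcp := cont_pos b ε n (k + 1) (fun i h1 h2 => hb i (by omega) (by omega))
      (fun i h1 h2 => hε i (by omega) (by omega))
    field_simp

lemma scf_rat (b ε : ℕ → ℤ) : ∀ n k, ∃ v : ℚ, scf b ε k n = (v : ℝ) := by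
  intro n
  induction n with
  | zero => intro k; exact ⟨0, by simp [scf]⟩
  | succ n ih =>
    intro k
    obtain ⟨w, hw⟩ := ih (k + 1)
    refine ⟨(ε k : ℚ) / ((b k : ℚ) + w), ?_⟩
    show (ε k : ℝ) / ((b k : ℝ) + scf b ε (k + 1) n) = _
    rw [hw]
    push_cast
    ring


/-- For entries `b_i ≥ 2` and signs `ε_i = ±1`, each tail value
`v_k = [⟨b_j : ε_j⟩_{j=k}^m]` is a well-defined nonzero rational number, and the
product of their absolute values equals `1/q_m`. (Indices are 0-based.) -/
theorem scf_tail_product_eq_inv_den (m : ℕ) (hm : 1 ≤ m) (b ε : ℕ → ℤ)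
    (hb : ∀ i < m, 2 ≤ b i) (hε : ∀ i < m, ε i = 1 ∨ ε i = -1) :
    (∀ k < m, scfWD b ε k (m - k) ∧ scf b ε k (m - k) ≠ 0 ∧
      ∃ v : ℚ, scf b ε k (m - k) = (v : ℝ)) ∧
    (∏ k ∈ Finset.range m, |scf b ε k (m - k)|) = 1 / (scfDen b ε (m + 1) : ℝ) := by
  constructor
  · intro k hk
    obtain ⟨wd, -, hpos⟩ := tail_bound b ε (m - k) k
      (fun i h1 h2 => hb i (by omega)) (fun i h1 h2 => hε i (by omega))
    refine ⟨wd, ?_, scf_rat b ε (m - k) k⟩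
    have := hpos (by omega)
    intro h
    rw [h] at this
    simp at this
  · have hprod := scf_prod b ε m 0 (fun i h1 h2 => hb i (by omega))
      (fun i h1 h2 => hε i (by omega))
    simp only [zero_add] at hprod
    rw [hprod, scfDen_eq_cont]
end

section
/- There exists a constant C₀ > 0 such that for every integer n ≥ 1, all integers b₁, …, b_n ≥ 2 satisfying b_{j+1} ≥ b_j² for 1 ≤ j ≤ n−1, and all signs ε₁, …, ε_n ∈ {+1, −1}, setting t_j = |[⟨b_i : ε_i⟩_{i=j}^n]| for 1 ≤ j ≤ n, one has t_n / t₁ ≤ C₀ · ∏_{i=1}^{n−1} t_i (the empty product for n = 1 being 1). -/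
lemma scf_succ (b ε : ℕ → ℤ) (k m : ℕ) :
    scf b ε k (m + 1) = (ε k : ℝ) / ((b k : ℝ) + scf b ε (k + 1) m) := by
  rfl

lemma scf_bounds (b ε : ℕ → ℤ) :
    ∀ m k, 1 ≤ m →
    (∀ i, k ≤ i → i < k + m → 2 ≤ b i) →
    (∀ j, k ≤ j → j + 1 < k + m → (b j) ^ 2 ≤ b (j + 1)) →
    (∀ i, k ≤ i → i < k + m → ε i = 1 ∨ ε i = -1) →
    1 / ((b k : ℝ) + 1/2) ≤ |scf b ε k m| ∧ |scf b ε k m| ≤ 1 / ((b k : ℝ) - 1/2) := by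
  intro m
  induction m with
  | zero => intro k h; omega
  | succ m ih =>
    intro k _ hb hg hε
    have hbk : (2:ℝ) ≤ (b k : ℝ) := by exact_mod_cast hb k le_rfl (by omega)
    have hεk : |(ε k : ℝ)| = 1 := by
      rcases hε k le_rfl (by omega) with h | h <;> simp [h]
    have hs : |scf b ε (k+1) m| ≤ 1/2 := by
      rcases Nat.eq_zero_or_pos m with hm | hm
      · subst hm; simp [scf]
      · have hIH := ih (k+1) hm (fun i h1 h2 => hb i (by omega) (by omega))
          (fun j h1 h2 => hg j (by omega) (by omega))
          (fun i h1 h2 => hε i (by omega) (by omega))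
        have hbk1 : (4:ℝ) ≤ (b (k+1) : ℝ) := by
          have h1 := hg k le_rfl (by omega)
          have h2 := hb k le_rfl (by omega)
          have : (4:ℤ) ≤ b (k+1) := by nlinarith
          exact_mod_cast this
        have := hIH.2
        have h7 : (1:ℝ) / ((b (k+1) : ℝ) - 1/2) ≤ 1/2 := by
          rw [div_le_div_iff₀ (by linarith) (by norm_num)]; linarith
        linarith
    have habs : |scf b ε k (m+1)| = 1 / |(b k : ℝ) + scf b ε (k+1) m| := by
      rw [scf_succ, abs_div, hεk]
    have hlo : (b k : ℝ) - 1/2 ≤ |(b k : ℝ) + scf b ε (k+1) m| := by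
      have h3 : |(b k : ℝ)| ≤ |(b k : ℝ) + scf b ε (k+1) m| + |scf b ε (k+1) m| := by
        calc |(b k : ℝ)| = |((b k : ℝ) + scf b ε (k+1) m) + (-(scf b ε (k+1) m))| := by ring_nf
        _ ≤ |(b k : ℝ) + scf b ε (k+1) m| + |(-(scf b ε (k+1) m))| := abs_add_le _ _
        _ = |(b k : ℝ) + scf b ε (k+1) m| + |scf b ε (k+1) m| := by rw [abs_neg]
      have h2 : |(b k : ℝ)| = (b k : ℝ) := abs_of_nonneg (by linarith)
      linarith
    have hhi : |(b k : ℝ) + scf b ε (k+1) m| ≤ (b k : ℝ) + 1/2 := by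
      calc |(b k : ℝ) + scf b ε (k+1) m| ≤ |(b k : ℝ)| + |scf b ε (k+1) m| := abs_add_le _ _
      _ ≤ (b k : ℝ) + 1/2 := by rw [abs_of_nonneg (by linarith : (0:ℝ) ≤ (b k:ℝ))]; linarith
    have hpos : (0:ℝ) < (b k : ℝ) - 1/2 := by linarith
    constructor
    · rw [habs]
      apply one_div_le_one_div_of_le (by linarith) hhi
    · rw [habs]
      apply one_div_le_one_div_of_le hpos hlo

lemma pow_le_b (b : ℕ → ℤ) (n : ℕ) (hb : ∀ i < n, 2 ≤ b i)
    (hg : ∀ j, j + 1 < n → (b j) ^ 2 ≤ b (j + 1)) :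
    ∀ k < n, 2 ^ (k + 1) ≤ b k := by
  intro k
  induction k with
  | zero => intro hk; simpa using hb 0 hk
  | succ k ih =>
    intro hk
    have h1 := ih (by omega)
    have h2 := hg k (by omega)
    have hbk := hb k (by omega)
    have hpow : (0:ℤ) < 2 ^ (k+1) := by positivity
    calc (2:ℤ) ^ (k + 1 + 1) = 2 ^ (k+1) * 2 := by ring
    _ ≤ b k * b k := mul_le_mul h1 hbk (by norm_num) (by linarith)
    _ = b k ^ 2 := (sq (b k)).symm
    _ ≤ b (k+1) := h2

lemma prod_b_le (b : ℕ → ℤ) (n : ℕ) (hb : ∀ i < n, 2 ≤ b i)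
    (hg : ∀ j, j + 1 < n → (b j) ^ 2 ≤ b (j + 1)) :
    ∀ k < n, b 0 * ∏ i ∈ Finset.range k, b i ≤ b k := by
  intro k
  induction k with
  | zero => intro hk; simp
  | succ k ih =>
    intro hk
    have h1 := ih (by omega)
    have hbk := hb k (by omega)
    have h2 := hg k (by omega)
    calc b 0 * ∏ i ∈ Finset.range (k+1), b i
        = (b 0 * ∏ i ∈ Finset.range k, b i) * b k := by
          rw [Finset.prod_range_succ]; ring
    _ ≤ b k * b k := mul_le_mul_of_nonneg_right h1 (by linarith)
    _ = b k ^ 2 := (sq (b k)).symm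
    _ ≤ b (k+1) := h2

lemma prod_half_le (b : ℕ → ℤ) (n : ℕ) (hb : ∀ i < n, 2 ≤ b i)
    (hg : ∀ j, j + 1 < n → (b j) ^ 2 ≤ b (j + 1)) :
    ∀ k < n, ((b 0 : ℝ) + 1/2) * ∏ i ∈ Finset.range k, ((b i : ℝ) + 1/2) ≤
      (4 - 2 / 2 ^ k) * ((b 0 : ℝ) * ∏ i ∈ Finset.range k, (b i : ℝ)) := by
  intro k
  induction k with
  | zero =>
    intro hk
    have : (2:ℝ) ≤ (b 0 : ℝ) := by exact_mod_cast hb 0 hk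
    simp only [Finset.range_zero, Finset.prod_empty, mul_one, pow_zero]
    norm_num
    linarith
  | succ k ih =>
    intro hk
    have hIH := ih (by omega)
    have hbk : (2:ℝ) ≤ (b k : ℝ) := by exact_mod_cast hb k (by omega)
    have hbpow : ((2:ℝ)) ^ (k+1) ≤ (b k : ℝ) := by
      exact_mod_cast pow_le_b b n hb hg k (by omega)
    have hP : (0:ℝ) < (b 0 : ℝ) * ∏ i ∈ Finset.range k, (b i : ℝ) := by
      apply mul_pos
      · have : (2:ℝ) ≤ (b 0 : ℝ) := by exact_mod_cast hb 0 (by omega)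
        linarith
      · apply Finset.prod_pos
        intro i hi
        have : (2:ℝ) ≤ (b i : ℝ) := by
          exact_mod_cast hb i (by simp at hi; omega)
        linarith
    set p : ℝ := (2:ℝ) ^ k with hp
    have hppos : (0:ℝ) < p := by positivity
    have hkey : (4 - 2 / p) * ((b k : ℝ) + 1/2) ≤ (4 - 1 / p) * (b k : ℝ) := by
      have h2p : 2 * p ≤ (b k : ℝ) := by
        rw [hp]; rw [pow_succ] at hbpow; linarith
      have hexp : (4 - 2 / p) * ((b k : ℝ) + 1/2) - (4 - 1 / p) * (b k : ℝ)
          = 2 - 1/p - (b k : ℝ)/p := by field_simp; ring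
      have hdiv : (2:ℝ) ≤ (b k : ℝ) / p := by
        rw [le_div_iff₀ hppos]; linarith
      have h1p : (0:ℝ) < 1/p := by positivity
      linarith
    calc ((b 0 : ℝ) + 1/2) * ∏ i ∈ Finset.range (k+1), ((b i : ℝ) + 1/2)
        = (((b 0 : ℝ) + 1/2) * ∏ i ∈ Finset.range k, ((b i : ℝ) + 1/2)) * ((b k : ℝ) + 1/2) := by
          rw [Finset.prod_range_succ]; ring
    _ ≤ ((4 - 2 / p) * ((b 0 : ℝ) * ∏ i ∈ Finset.range k, (b i : ℝ))) * ((b k : ℝ) + 1/2) := by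
          apply mul_le_mul_of_nonneg_right hIH (by linarith)
    _ = ((b 0 : ℝ) * ∏ i ∈ Finset.range k, (b i : ℝ)) * ((4 - 2 / p) * ((b k : ℝ) + 1/2)) := by
          ring
    _ ≤ ((b 0 : ℝ) * ∏ i ∈ Finset.range k, (b i : ℝ)) * ((4 - 1 / p) * (b k : ℝ)) :=
          mul_le_mul_of_nonneg_left hkey hP.le
    _ = (4 - 2 / 2 ^ (k+1)) * ((b 0 : ℝ) * ∏ i ∈ Finset.range (k+1), (b i : ℝ)) := by
          rw [Finset.prod_range_succ, hp, pow_succ]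
          have : (2:ℝ) / (2^k * 2) = 1 / 2^k := by
            rw [div_eq_div_iff (by positivity) (by positivity)]; ring
          rw [this]; ring

/-- There is a universal constant `C₀ > 0` such that for every signed continued
fraction with entries `b_j ≥ 2` satisfying the quadratic growth `b_{j+1} ≥ b_j²`
and signs `±1`, the absolute values `t_j` of the tails starting at index `j`
satisfy `t_n / t₁ ≤ C₀ ∏_{i=1}^{n-1} t_i` (0-based: tail `j` is
`|scf b ε j (n - j)|`). -/
theorem scf_tail_quadratic_growth_estimate :
    ∃ C₀ : ℝ, 0 < C₀ ∧
      ∀ n : ℕ, 1 ≤ n → ∀ b ε : ℕ → ℤ,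
        (∀ i < n, 2 ≤ b i) →
        (∀ j, j + 1 < n → (b j) ^ 2 ≤ b (j + 1)) →
        (∀ i < n, ε i = 1 ∨ ε i = -1) →
        |scf b ε (n - 1) 1| / |scf b ε 0 n| ≤
          C₀ * ∏ i ∈ Finset.range (n - 1), |scf b ε i (n - i)| := by
  refine ⟨4, by norm_num, ?_⟩
  intro n hn b ε hb hg hε
  set N := n - 1 with hNdef
  have hNn : N + 1 = n := by omega
  have hbR : ∀ i < n, (2:ℝ) ≤ (b i : ℝ) := fun i hi => by exact_mod_cast hb i hi
  -- tail bounds for each i < n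
  have hbounds : ∀ i < n, 1/((b i : ℝ)+1/2) ≤ |scf b ε i (n - i)| ∧
      |scf b ε i (n - i)| ≤ 1/((b i : ℝ)-1/2) := by
    intro i hi
    have h := scf_bounds b ε (n - i) i (by omega)
      (fun j h1 h2 => hb j (by omega)) (fun j h1 h2 => hg j (by omega))
      (fun j h1 h2 => hε j (by omega))
    exact h
  -- the last tail
  have hlast : |scf b ε N 1| = 1 / (b N : ℝ) := by
    have hεN : |(ε N : ℝ)| = 1 := by
      rcases hε N (by omega) with h | h <;> simp [h]
    have hbN : (2:ℝ) ≤ (b N : ℝ) := hbR N (by omega)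
    rw [scf_succ]
    simp only [scf]
    rw [add_zero, abs_div, hεN, abs_of_nonneg (by linarith : (0:ℝ) ≤ (b N : ℝ))]
  have hbNpos : (0:ℝ) < (b N : ℝ) := by have := hbR N (by omega); linarith
  have hb0 : (2:ℝ) ≤ (b 0 : ℝ) := hbR 0 (by omega)
  -- t0
  have ht0 : 1/((b 0 : ℝ)+1/2) ≤ |scf b ε 0 n| := by
    have := (hbounds 0 (by omega)).1
    simpa using this
  have ht0pos : (0:ℝ) < |scf b ε 0 n| := lt_of_lt_of_le (by positivity) ht0
  -- step 1
  have step1 : |scf b ε N 1| / |scf b ε 0 n| ≤ ((b 0 : ℝ)+1/2) / (b N : ℝ) := by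
    rw [hlast, div_le_div_iff₀ ht0pos hbNpos]
    have h1 : (1:ℝ)/(b N : ℝ) * (b N : ℝ) = 1 := by field_simp
    have h2 : (1:ℝ) ≤ ((b 0 : ℝ)+1/2) * |scf b ε 0 n| := by
      have hpos : (0:ℝ) < (b 0 : ℝ)+1/2 := by linarith
      calc (1:ℝ) = ((b 0 : ℝ)+1/2) * (1/((b 0 : ℝ)+1/2)) := by field_simp
      _ ≤ ((b 0 : ℝ)+1/2) * |scf b ε 0 n| := by
          exact mul_le_mul_of_nonneg_left ht0 hpos.le
    linarith
  -- step 2: comparison of products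
  have hQpos : (0:ℝ) < ∏ i ∈ Finset.range N, ((b i : ℝ) + 1/2) := by
    apply Finset.prod_pos
    intro i hi
    have := hbR i (by simp at hi; omega)
    linarith
  have step2 : ((b 0 : ℝ)+1/2) / (b N : ℝ) ≤
      4 * ∏ i ∈ Finset.range N, (1/((b i : ℝ) + 1/2)) := by
    have hprodinv : ∏ i ∈ Finset.range N, (1/((b i : ℝ) + 1/2))
        = 1 / ∏ i ∈ Finset.range N, ((b i : ℝ) + 1/2) := by
      simp only [one_div]
      exact Finset.prod_inv_distrib _
    rw [hprodinv, mul_one_div, div_le_div_iff₀ hbNpos hQpos]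
    -- goal: (b0+1/2) * ∏ (b_i+1/2) ≤ 4 * bN
    have hkey := prod_half_le b n hb hg N (by omega)
    have hintle : (b 0 : ℤ) * ∏ i ∈ Finset.range N, b i ≤ b N :=
      prod_b_le b n hb hg N (by omega)
    have hPle : ((b 0 : ℝ) * ∏ i ∈ Finset.range N, (b i : ℝ)) ≤ (b N : ℝ) := by
      exact_mod_cast hintle
    have hPpos : (0:ℝ) < (b 0 : ℝ) * ∏ i ∈ Finset.range N, (b i : ℝ) := by
      apply mul_pos (by linarith)
      apply Finset.prod_pos
      intro i hi
      have := hbR i (by simp at hi; omega)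
      linarith
    have hcpos : (0:ℝ) < 2 / 2 ^ N := by positivity
    calc ((b 0 : ℝ)+1/2) * ∏ i ∈ Finset.range N, ((b i : ℝ) + 1/2)
        ≤ (4 - 2 / 2 ^ N) * ((b 0 : ℝ) * ∏ i ∈ Finset.range N, (b i : ℝ)) := hkey
    _ ≤ 4 * ((b 0 : ℝ) * ∏ i ∈ Finset.range N, (b i : ℝ)) := by nlinarith
    _ ≤ 4 * (b N : ℝ) := by linarith
  -- step 3
  have step3 : ∏ i ∈ Finset.range N, (1/((b i : ℝ) + 1/2)) ≤
      ∏ i ∈ Finset.range N, |scf b ε i (n - i)| := by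
    apply Finset.prod_le_prod
    · intro i hi
      simp only [Finset.mem_range] at hi
      have := hbR i (by omega)
      exact div_nonneg (by norm_num) (by linarith)
    · intro i hi
      simp only [Finset.mem_range] at hi
      exact (hbounds i (by omega)).1
  calc |scf b ε N 1| / |scf b ε 0 n| ≤ ((b 0 : ℝ)+1/2) / (b N : ℝ) := step1
  _ ≤ 4 * ∏ i ∈ Finset.range N, (1/((b i : ℝ) + 1/2)) := step2
  _ ≤ 4 * ∏ i ∈ Finset.range N, |scf b ε i (n - i)| := by
      exact mul_le_mul_of_nonneg_left step3 (by norm_num)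
end

section
/- Let a ∈ ℂ with |a| < 1, let θ ∈ ℝ, and let h : ℂ → ℂ be given by h(z) = e^{iθ}(z − a)/(1 − (conj a) z). Let C ≥ 1 and suppose that for all z, w in the open unit disk {z ∈ ℂ : |z| < 1} one has |h′(z)| ≤ C |h′(w)|. Then |h(0)| ≤ (√C − 1)/(√C + 1). -/
open Real

private lemma blaschke_hasDerivAt (E a z : ℂ) (hz : 1 - (starRingEnd ℂ) a * z ≠ 0) :
    HasDerivAt (fun z => E * (z - a) / (1 - (starRingEnd ℂ) a * z))
      (E * (1 - (starRingEnd ℂ) a * a) / (1 - (starRingEnd ℂ) a * z) ^ 2) z := by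
  have hf : HasDerivAt (fun z : ℂ => E * (z - a)) E z := by
    simpa using ((hasDerivAt_id z).sub_const a).const_mul E
  have hg : HasDerivAt (fun z : ℂ => 1 - (starRingEnd ℂ) a * z) (-((starRingEnd ℂ) a)) z := by
    simpa using ((hasDerivAt_id z).const_mul ((starRingEnd ℂ) a)).const_sub 1
  have hd := hf.fun_div hg hz
  refine hd.congr_deriv ?_
  ring

private lemma blaschke_denom_ne (a z : ℂ) (ha : ‖a‖ < 1)
    (hz : ‖z‖ < 1) : 1 - (starRingEnd ℂ) a * z ≠ 0 := by
  intro hzero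
  have h1 : (starRingEnd ℂ) a * z = 1 := by linear_combination -hzero
  have := congrArg (‖·‖) h1
  simp only [norm_mul, norm_one, Complex.norm_conj] at this
  nlinarith [norm_nonneg a, norm_nonneg z]

/-- If a Möbius automorphism `h(z) = e^{iθ}(z - a)/(1 - ā z)` of the unit disk has
derivative distortion bounded by `C` on the disk, then
`|h(0)| ≤ (√C - 1)/(√C + 1)`. -/
theorem blaschke_distortion_center (a : ℂ) (ha : ‖a‖ < 1) (θ : ℝ)
    (h : ℂ → ℂ)
    (hdef : ∀ z : ℂ, h z =
      Complex.exp (Complex.I * (θ : ℂ)) * (z - a) / (1 - (starRingEnd ℂ) a * z))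
    (C : ℝ) (hC : 1 ≤ C)
    (hdist : ∀ z w : ℂ, ‖z‖ < 1 → ‖w‖ < 1 →
      ‖deriv h z‖ ≤ C * ‖deriv h w‖) :
    ‖h 0‖ ≤ (Real.sqrt C - 1) / (Real.sqrt C + 1) := by
  set E := Complex.exp (Complex.I * (θ : ℂ)) with hE
  have hEabs : ‖E‖ = 1 := by
    rw [hE, Complex.norm_exp]
    simp
  have hfun : h = fun z => E * (z - a) / (1 - (starRingEnd ℂ) a * z) := funext hdef
  have h0 : ‖h 0‖ = ‖a‖ := by
    rw [hdef]
    simp [hEabs]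
  set r := ‖a‖ with hr
  set s := Real.sqrt C with hs
  have hC0 : (0:ℝ) ≤ C := by linarith
  have hsC : s ^ 2 = C := Real.sq_sqrt hC0
  have hs1 : 1 ≤ s := by
    nlinarith [Real.sqrt_nonneg C]
  rw [h0]
  by_contra hcon
  push_neg at hcon
  set m := (s - 1) / (s + 1) with hm
  have hm0 : 0 ≤ m := div_nonneg (by linarith) (by linarith)
  have hm1 : m < 1 := by
    rw [hm, div_lt_one (by linarith)]; linarith
  have hrpos : 0 < r := lt_of_le_of_lt hm0 hcon
  have hane : a ≠ 0 := by
    intro h0a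
    rw [hr, h0a] at hrpos
    simp at hrpos
  set x := (m + r) / 2 with hx
  have hmx : m < x := by rw [hx]; linarith
  have hxr : x < r := by rw [hx]; linarith
  have hx0 : 0 < x := lt_of_le_of_lt hm0 hmx
  have hx1 : x < 1 := lt_trans hxr ha
  -- the test points
  set z := ((x / r ^ 2 : ℝ) : ℂ) * a with hz
  set w := -z with hw
  have hconj : (starRingEnd ℂ) a * a = ((r ^ 2 : ℝ) : ℂ) := by
    rw [mul_comm, Complex.mul_conj', hr]
    push_cast; ring
  have hr2 : (r : ℝ) ^ 2 ≠ 0 := by positivity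
  have hrCne : ((r : ℝ) : ℂ) ≠ 0 := by exact_mod_cast hrpos.ne'
  have hcz : (starRingEnd ℂ) a * z = ((x : ℝ) : ℂ) := by
    rw [hz]
    rw [mul_comm ((x / r ^ 2 : ℝ) : ℂ) a, ← mul_assoc, hconj]
    push_cast
    field_simp [hrCne]
  have hcw : (starRingEnd ℂ) a * w = -((x : ℝ) : ℂ) := by
    rw [hw, mul_neg, hcz]
  have hzabs : ‖z‖ = x / r := by
    rw [hz, norm_mul, Complex.norm_real, Real.norm_eq_abs, abs_of_pos (by positivity), ← hr,
      pow_two, ← div_div, div_mul_cancel₀ _ hrpos.ne']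
  have hzlt : ‖z‖ < 1 := by
    rw [hzabs, div_lt_one hrpos]; exact hxr
  have hwlt : ‖w‖ < 1 := by
    rw [hw, norm_neg]; exact hzlt
  -- derivatives
  have hdz : deriv h z = E * (1 - (starRingEnd ℂ) a * a) / (1 - (starRingEnd ℂ) a * z) ^ 2 := by
    rw [hfun]
    exact (blaschke_hasDerivAt E a z (blaschke_denom_ne a z ha hzlt)).deriv
  have hdw : deriv h w = E * (1 - (starRingEnd ℂ) a * a) / (1 - (starRingEnd ℂ) a * w) ^ 2 := by
    rw [hfun]
    exact (blaschke_hasDerivAt E a w (blaschke_denom_ne a w ha hwlt)).deriv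
  have hnum : ‖1 - (starRingEnd ℂ) a * a‖ = 1 - r ^ 2 := by
    rw [hconj]
    rw [show (1 : ℂ) - ((r ^ 2 : ℝ) : ℂ) = (((1 - r ^ 2 : ℝ)) : ℂ) by push_cast; ring,
      Complex.norm_real, Real.norm_eq_abs, abs_of_pos (by nlinarith)]
  have habsz : ‖deriv h z‖ = (1 - r ^ 2) / (1 - x) ^ 2 := by
    rw [hdz, norm_div, norm_mul, hEabs, one_mul, hnum, norm_pow, hcz,
      show (1 : ℂ) - ((x : ℝ) : ℂ) = (((1 - x : ℝ)) : ℂ) by push_cast; ring,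
      Complex.norm_real, Real.norm_eq_abs, abs_of_pos (by linarith)]
  have habsw : ‖deriv h w‖ = (1 - r ^ 2) / (1 + x) ^ 2 := by
    rw [hdw, norm_div, norm_mul, hEabs, one_mul, hnum, norm_pow, hcw,
      show (1 : ℂ) - -((x : ℝ) : ℂ) = (((1 + x : ℝ)) : ℂ) by push_cast; ring,
      Complex.norm_real, Real.norm_eq_abs, abs_of_pos (by linarith)]
  have hkey := hdist z w hzlt hwlt
  rw [habsz, habsw] at hkey
  have hr1 : r < 1 := ha
  clear hdist hdef hfun hdz hdw habsz habsw hcz hcw hconj hzabs hzlt hwlt hz hw hane hrCne hEabs hE h0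
  clear_value z w
  clear z w
  clear_value E r s m x
  have h1x : 1 + x > s * (1 - x) := by
    have : x * (s + 1) > s - 1 := by
      rw [hm, div_lt_iff₀ (by linarith : (0:ℝ) < s + 1)] at hmx
      linarith
    nlinarith
  have hdenpos1 : (0:ℝ) < (1 - x) ^ 2 := pow_pos (by linarith) 2
  have hdenpos2 : (0:ℝ) < (1 + x) ^ 2 := pow_pos (by linarith) 2
  have hnumpos : (0:ℝ) < 1 - r ^ 2 := by nlinarith
  rw [mul_div_assoc'] at hkey
  rw [div_le_div_iff₀ hdenpos1 hdenpos2] at hkey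
  have hA : (0:ℝ) < 1 + x - s * (1 - x) := by linarith
  have hB : (0:ℝ) < 1 + x + s * (1 - x) := by
    have : 0 ≤ s * (1 - x) := mul_nonneg (by linarith) (by linarith)
    linarith
  have h2 : C * (1 - x) ^ 2 < (1 + x) ^ 2 := by nlinarith [mul_pos hA hB]
  have h3 := mul_lt_mul_of_pos_left h2 hnumpos
  have h4 : (1 - r ^ 2) * (C * (1 - x) ^ 2) = C * (1 - r ^ 2) * (1 - x) ^ 2 := by ring
  linarith
end

section
/- There exists a constant C > 0 such that for every real x with 0 < x ≤ 1/2 and every θ ∈ [−π/4, π/4], one has 1 + x · ∫_1^∞ 1/(e^{2π t x cos θ} − 1) dt ≤ C (1 − log x). -/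
open Real MeasureTheory Set

lemma exp_neg_integral_Ioi' {a : ℝ} (ha : 0 < a) (b : ℝ) :
    ∫ t in Ioi b, Real.exp (-(a * t)) = Real.exp (-(a * b)) / a := by
  have h := integral_comp_mul_left_Ioi (fun y => Real.exp (-y)) b ha
  simp only [smul_eq_mul] at h
  calc ∫ t in Ioi b, Real.exp (-(a * t)) = a⁻¹ * ∫ y in Ioi (a * b), Real.exp (-y) := h
  _ = Real.exp (-(a * b)) / a := by rw [integral_exp_neg_Ioi]; ring

/-- There is a constant `C > 0` such that for `0 < x ≤ 1/2` and `|θ| ≤ π/4`,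
`1 + x ∫_1^∞ dt/(e^{2πtx cos θ} - 1) ≤ C (1 - log x)`. -/
theorem integral_log_estimate :
    ∃ C : ℝ, 0 < C ∧
      ∀ x θ : ℝ, 0 < x → x ≤ 1 / 2 → |θ| ≤ π / 4 →
        1 + x * ∫ t in Set.Ioi (1 : ℝ), 1 / (Real.exp (2 * π * t * x * Real.cos θ) - 1) ≤
          C * (1 - Real.log x) := by
  refine ⟨2, by norm_num, fun x θ hx hx2 hθ => ?_⟩
  have hπ : (0:ℝ) < π := Real.pi_pos
  have hπ3 : (3:ℝ) < π := Real.pi_gt_three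
  -- cos θ ≥ 1/2
  have hc : (1:ℝ)/2 ≤ Real.cos θ := by
    have h1 : Real.cos θ = Real.cos |θ| := (Real.cos_abs θ).symm
    have h2 : Real.cos (π/4) ≤ Real.cos |θ| := by
      apply Real.cos_le_cos_of_nonneg_of_le_pi (abs_nonneg θ)
      · linarith [Real.pi_le_four]
      · exact hθ
    have h3 : Real.cos (π/4) = Real.sqrt 2 / 2 := Real.cos_pi_div_four
    have h4 : (1:ℝ) ≤ Real.sqrt 2 := by
      nlinarith [Real.sq_sqrt (by norm_num : (0:ℝ) ≤ 2), Real.sqrt_nonneg 2]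
    rw [h1]; rw [h3] at h2; linarith
  set c := Real.cos θ with hcdef
  set a := 2 * π * x * c with hadef
  have ha : 0 < a := by positivity
  set b := 1 / x with hbdef
  have hb1 : (1:ℝ) ≤ b := by
    rw [hbdef, le_div_iff₀ hx]; linarith
  have hab : a * b = 2 * π * c := by
    rw [hadef, hbdef]; field_simp
  have hab1 : (1:ℝ) ≤ a * b := by rw [hab]; nlinarith
  -- rewrite integrand
  have hfun : (fun t => 1 / (Real.exp (2 * π * t * x * Real.cos θ) - 1))
      = fun t => 1 / (Real.exp (a * t) - 1) := by
    funext t; rw [show 2 * π * t * x * Real.cos θ = a * t by rw [hadef]; ring]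
  set f : ℝ → ℝ := fun t => 1 / (Real.exp (a * t) - 1) with hfdef
  -- denominator positivity
  have hden : ∀ t : ℝ, 0 < t → 0 < Real.exp (a * t) - 1 := fun t ht => by
    have : (1:ℝ) < Real.exp (a * t) := by
      rw [← Real.exp_zero]; exact Real.exp_lt_exp.mpr (by positivity)
    linarith
  -- continuity of f on positive reals
  have hcont : ContinuousOn f {t : ℝ | 0 < t} := by
    apply ContinuousOn.div continuousOn_const
    · exact ((Real.continuous_exp.comp (continuous_const.mul continuous_id)).sub
        continuous_const).continuousOn
    · intro t ht; exact ne_of_gt (hden t ht)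
  have hIcc_sub : Icc (1:ℝ) b ⊆ {t : ℝ | 0 < t} := fun t ht => lt_of_lt_of_le one_pos ht.1
  have hIoi_sub : Ioi b ⊆ {t : ℝ | 0 < t} := fun t ht =>
    lt_of_lt_of_le one_pos (le_of_lt (lt_of_le_of_lt hb1 ht))
  -- integrability on Ioc 1 b
  have h1 : IntegrableOn f (Ioc 1 b) :=
    ((hcont.mono hIcc_sub).integrableOn_Icc).mono_set Ioc_subset_Icc_self
  -- dominating function on the tail
  have hg : IntegrableOn (fun t : ℝ => 2 * Real.exp (-(a * t))) (Ioi b) := by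
    have := (exp_neg_integrableOn_Ioi b ha).const_mul 2
    simpa [neg_mul, IntegrableOn] using this
  have htail : ∀ t ∈ Ioi b, f t ≤ 2 * Real.exp (-(a * t)) := by
    intro t ht
    have htb : b < t := ht
    have hat : (1:ℝ) ≤ a * t := hab1.trans (by nlinarith)
    have h2le : (2:ℝ) ≤ Real.exp (a * t) :=
      le_trans (by linarith [Real.add_one_le_exp 1]) (Real.exp_le_exp.mpr hat)
    have hd := hden t (hIoi_sub ht)
    have hexp : 0 < Real.exp (a * t) := Real.exp_pos _
    rw [Real.exp_neg, hfdef]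
    rw [div_le_iff₀ hd]
    rw [show 2 * (Real.exp (a*t))⁻¹ * (Real.exp (a*t) - 1)
        = 2 - 2 * (Real.exp (a*t))⁻¹ by field_simp]
    have hinv : 1 / Real.exp (a*t) ≤ 1/2 := one_div_le_one_div_of_le two_pos h2le
    rw [inv_eq_one_div]
    linarith
  -- integrability on the tail
  have h2 : IntegrableOn f (Ioi b) := by
    apply hg.mono' ((hcont.mono hIoi_sub).aestronglyMeasurable measurableSet_Ioi)
    filter_upwards [self_mem_ae_restrict measurableSet_Ioi] with t ht
    have hd := hden t (hIoi_sub ht)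
    rw [Real.norm_eq_abs, abs_of_nonneg (le_of_lt (by positivity))]
    exact htail t ht
  -- split the integral
  have hsplit : ∫ t in Ioi (1:ℝ), f t = (∫ t in Ioc 1 b, f t) + ∫ t in Ioi b, f t := by
    rw [← setIntegral_union (Ioc_disjoint_Ioi le_rfl) measurableSet_Ioi h1 h2,
      Ioc_union_Ioi_eq_Ioi hb1]
  -- head bound
  have hhead_int : IntegrableOn (fun t : ℝ => 1 / (a * t)) (Ioc 1 b) := by
    have : ContinuousOn (fun t : ℝ => 1 / (a * t)) (Icc 1 b) := by
      apply ContinuousOn.div continuousOn_const (continuous_const.mul continuous_id).continuousOn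
      intro t ht
      have := hIcc_sub ht
      have h0t : (0:ℝ) < t := this
      exact mul_ne_zero ha.ne' h0t.ne'
    exact this.integrableOn_Icc.mono_set Ioc_subset_Icc_self
  have hhead_le : (∫ t in Ioc (1:ℝ) b, f t) ≤ ∫ t in Ioc (1:ℝ) b, 1 / (a * t) := by
    apply setIntegral_mono_on h1 hhead_int measurableSet_Ioc
    intro t ht
    have htpos : 0 < t := lt_of_lt_of_le one_pos ht.1.le
    have hd := hden t htpos
    apply one_div_le_one_div_of_le (by positivity)
    linarith [Real.add_one_le_exp (a * t)]
  have hhead_val : (∫ t in Ioc (1:ℝ) b, 1 / (a * t)) = a⁻¹ * Real.log b := by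
    rw [← intervalIntegral.integral_of_le hb1]
    have heq : ∀ t : ℝ, 1 / (a * t) = a⁻¹ * (1 / t) := fun t => by
      rw [one_div, mul_inv, ← one_div, inv_eq_one_div]
    simp_rw [heq]
    rw [intervalIntegral.integral_const_mul, integral_one_div, div_one]
    intro h
    rcases Set.mem_uIcc.mp h with h' | h' <;> [skip; skip] <;>
      · obtain ⟨h1', h2'⟩ := h'
        first
        | linarith
        | (rw [hbdef] at *; nlinarith)
  -- tail bound
  have htail_le : (∫ t in Ioi b, f t) ≤ 2 / a := by
    calc (∫ t in Ioi b, f t) ≤ ∫ t in Ioi b, 2 * Real.exp (-(a * t)) :=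
      setIntegral_mono_on h2 hg measurableSet_Ioi htail
    _ = 2 * (Real.exp (-(a * b)) / a) := by
        rw [integral_const_mul, exp_neg_integral_Ioi' ha]
    _ ≤ 2 / a := by
        have he1 : Real.exp (-(a * b)) ≤ 1 := Real.exp_le_one_iff.mpr (by linarith)
        rw [show (2:ℝ)/a = 2 * (1/a) by ring]
        gcongr
  -- assemble
  rw [hfun]
  have hlogb : Real.log b = -Real.log x := by rw [hbdef, one_div, Real.log_inv]
  have hIle : (∫ t in Ioi (1:ℝ), f t) ≤ a⁻¹ * (-Real.log x) + 2 / a := by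
    rw [hsplit]
    exact add_le_add (hhead_le.trans (le_of_eq (by rw [hhead_val, hlogb]))) htail_le
  have hlogx : Real.log x ≤ 0 := Real.log_nonpos hx.le (by linarith)
  have hxle_a : x ≤ a := by rw [hadef]; nlinarith
  have h2x_a : 2 * x ≤ a := by
    have hπc : (1:ℝ) ≤ π * c := by nlinarith
    rw [hadef]
    nlinarith [mul_le_mul_of_nonneg_left hπc (by positivity : (0:ℝ) ≤ 2 * x)]
  have hxa : x * a⁻¹ ≤ 1 := by
    calc x * a⁻¹ ≤ a * a⁻¹ := by gcongr
    _ = 1 := mul_inv_cancel₀ ha.ne'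
  have hx2a : x * (2 / a) ≤ 1 := by
    rw [show x * (2/a) = 2*x/a by ring, div_le_one ha]
    exact h2x_a
  have hmul := mul_le_mul_of_nonneg_left hIle hx.le
  have hring : x * (a⁻¹ * (-Real.log x) + 2 / a)
      = (x * a⁻¹) * (-Real.log x) + x * (2 / a) := by ring
  have hkey : (x * a⁻¹) * (-Real.log x) ≤ -Real.log x :=
    mul_le_of_le_one_left (by linarith) hxa
  rw [hring] at hmul
  linarith
end

section
/- For every r ∈ (0, 1/2) there exists an integer N ≥ 2 with the following property. Let ⟨m_i : b_{i,j} : ε_{i,j}⟩ be a sequence with integers m_i ≥ 1, integers b_{i,j} ≥ 2 and signs ε_{i,j} ∈ {+1, −1} (for i ≥ 1, 1 ≤ j ≤ m_i) belonging to the class QG_N, let p_i/q_i = [⟨b_{i,j} : ε_{i,j}⟩_{j=1}^{m_i}] with q_i > 0 the denominator produced by the recursion, and set k₁ = 1 and k_i = ∏_{l=1}^{i−1} q_l for i ≥ 2. Then for every i ≥ 1 and every z ∈ ℂ with |z − (p_i/q_i − 𝑖 · (k_i/q_i) · (log 2)/(2π))| ≤ ((log 2)/(2π)) · (k_i/q_i)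 (where 𝑖 is the imaginary unit): (a) for every integer n with 0 ≤ n ≤ m_i − 2, the iterate G^n(z) is defined (the orbit does not pass through 0) and satisfies |G^n(z)| ≤ r and |Im G^n(z)| ≤ |Re G^n(z)|; and (b) the iterate G^{m_i−1}(z) is defined and satisfies |G^{m_i−1}(z)| ≤ r. -/
open Real

/-- The integer closest to `x`, with the convention `x ∈ ([x]-1/2, [x]+1/2]` for
`x > 0` and `x ∈ [[x]-1/2, [x]+1/2)` for `x < 0` (and `[0] = 0`). -/
noncomputable def nearestInt (x : ℝ) : ℤ :=
  if 0 < x then ⌈x - 1 / 2⌉ else ⌊x + 1 / 2⌋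

/-- The complex modified Gauss map `G(z) = -1/z - [Re(-1/z)]`. -/
noncomputable def mGaussC (z : ℂ) : ℂ :=
  -1 / z - (nearestInt (-1 / z).re : ℂ)

lemma scfDen_front (c d : ℕ → ℤ) (L : ℕ) :
    scfDen c d (L + 2) =
      c 0 * scfDen (fun j => c (j + 1)) (fun j => d (j + 1)) (L + 1) +
      d 1 * scfDen (fun j => c (j + 2)) (fun j => d (j + 2)) L := by
  induction L using Nat.strong_induction_on with
  | _ L ih =>
    match L with
    | 0 => simp [scfDen]
    | 1 => simp [scfDen]; ring
    | (L + 2) =>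
      have e1 := ih (L + 1) (by omega)
      have e2 := ih L (by omega)
      have h1 : scfDen c d (L + 4) = c (L+2) * scfDen c d (L + 3) + d (L+2) * scfDen c d (L+2) := rfl
      have h2 : scfDen (fun j => c (j + 1)) (fun j => d (j + 1)) (L + 3)
          = c (L + 2) * scfDen (fun j => c (j + 1)) (fun j => d (j + 1)) (L + 2)
            + d (L + 2) * scfDen (fun j => c (j + 1)) (fun j => d (j + 1)) (L + 1) := rfl
      have h3 : scfDen (fun j => c (j + 2)) (fun j => d (j + 2)) (L + 2)
          = c (L + 2) * scfDen (fun j => c (j + 2)) (fun j => d (j + 2)) (L + 1)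
            + d (L + 2) * scfDen (fun j => c (j + 2)) (fun j => d (j + 2)) L := rfl
      rw [h1, e1, e2, h2, h3]; ring

/-- tail denominator: continuant of the entries `c n, …, c (L-1)`. -/
def qden (c d : ℕ → ℤ) (L n : ℕ) : ℤ :=
  scfDen (fun j => c (n + j)) (fun j => d (n + j)) (L - n + 1)

lemma qden_zero (c d : ℕ → ℤ) (L : ℕ) : qden c d L 0 = scfDen c d (L + 1) := by
  unfold qden
  congr 1 <;> try (funext j; simp)

lemma qden_top (c d : ℕ → ℤ) {L n : ℕ} (h : L ≤ n) : qden c d L n = 1 := by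
  unfold qden
  have : L - n = 0 := by omega
  rw [this]; rfl

lemma qden_last (c d : ℕ → ℤ) {L n : ℕ} (h : n + 1 = L) : qden c d L n = c n := by
  unfold qden
  have : L - n = 1 := by omega
  rw [this]
  show c (n + 0) * 1 + d (n + 0) * 0 = c n
  simp

lemma qden_rec (c d : ℕ → ℤ) {L n : ℕ} (h : n + 2 ≤ L) :
    qden c d L n = c n * qden c d L (n + 1) + d (n + 1) * qden c d L (n + 2) := by
  unfold qden
  have hL : L - n + 1 = (L - n - 1) + 2 := by omega
  rw [hL, scfDen_front]
  have e1 : (fun j => c (n + (j + 1))) = (fun j => c ((n + 1) + j)) := by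
    funext j; congr 1; omega
  have e2 : (fun j => d (n + (j + 1))) = (fun j => d ((n + 1) + j)) := by
    funext j; congr 1; omega
  have e3 : (fun j => c (n + (j + 2))) = (fun j => c ((n + 2) + j)) := by
    funext j; congr 1; omega
  have e4 : (fun j => d (n + (j + 2))) = (fun j => d ((n + 2) + j)) := by
    funext j; congr 1; omega
  have l1 : L - n - 1 + 1 = L - (n + 1) + 1 := by omega
  have l2 : L - n - 1 = L - (n + 2) + 1 := by omega
  rw [e1, e2, e3, e4, l1, l2]
  simp [Nat.add_comm]


section
variable {c d : ℕ → ℤ} {L : ℕ}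
variable (h2 : ∀ j < L, 2 ≤ c j) (hs : ∀ j < L, d j = 1 ∨ d j = -1)
include h2 hs

lemma qden_aux : ∀ t n, L ≤ n + t → 1 ≤ qden c d L n ∧ qden c d L (n + 1) ≤ qden c d L n := by
  intro t
  induction t with
  | zero =>
    intro n hn
    rw [qden_top c d (by omega), qden_top c d (by omega)]
    exact ⟨le_refl _, le_refl _⟩
  | succ t ih =>
    intro n hn
    rcases le_or_gt L n with h | h
    · rw [qden_top c d h, qden_top c d (by omega)]; exact ⟨le_refl _, le_refl _⟩
    rcases eq_or_lt_of_le (by omega : n + 1 ≤ L) with h1 | h1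
    · rw [qden_last c d h1, qden_top c d (by omega)]
      have := h2 n h
      exact ⟨by omega, by omega⟩
    · have hrec := qden_rec c d (L := L) (n := n) (by omega)
      obtain ⟨i1, i2⟩ := ih (n + 1) (by omega)
      obtain ⟨i3, _⟩ := ih (n + 2) (by omega)
      have hcn := h2 n h
      rcases hs (n + 1) (by omega) with hd | hd <;> rw [hd] at hrec <;>
        constructor <;> nlinarith
end

lemma qden_one_le {c d : ℕ → ℤ} {L : ℕ} (h2 : ∀ j < L, 2 ≤ c j)
    (hs : ∀ j < L, d j = 1 ∨ d j = -1) (n : ℕ) : 1 ≤ qden c d L n :=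
  (qden_aux h2 hs L n (by omega)).1

lemma qden_mono {c d : ℕ → ℤ} {L : ℕ} (h2 : ∀ j < L, 2 ≤ c j)
    (hs : ∀ j < L, d j = 1 ∨ d j = -1) (n : ℕ) : qden c d L (n + 1) ≤ qden c d L n :=
  (qden_aux h2 hs L n (by omega)).2

lemma qden_bounds {c d : ℕ → ℤ} {L : ℕ} (h2 : ∀ j < L, 2 ≤ c j)
    (hs : ∀ j < L, d j = 1 ∨ d j = -1) {n : ℕ} (hn : n < L) :
    (c n - 1) * qden c d L (n + 1) ≤ qden c d L n ∧
      qden c d L n ≤ (c n + 1) * qden c d L (n + 1) := by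
  rcases eq_or_lt_of_le (by omega : n + 1 ≤ L) with h1 | h1
  · rw [qden_last c d h1, qden_top c d (by omega)]
    have := h2 n hn
    constructor <;> omega
  · have hrec := qden_rec c d (L := L) (n := n) (by omega)
    have i1 := qden_one_le h2 hs (n + 1)
    have i2 := qden_mono h2 hs (n + 1)
    have i3 := qden_one_le h2 hs (n + 2)
    have hcn := h2 n hn
    rcases hs (n + 1) (by omega) with hd | hd <;> rw [hd] at hrec <;>
      constructor <;> nlinarith

lemma c_chain {c : ℕ → ℤ} {L : ℕ} (h2 : ∀ j < L, 2 ≤ c j)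
    (hsq : ∀ j, j + 1 < L → c j ^ 2 ≤ c (j + 1)) : ∀ n < L, c 0 ≤ c n := by
  intro n
  induction n with
  | zero => intro _; exact le_refl _
  | succ n ih =>
    intro hn
    have h1 := ih (by omega)
    have h2n := h2 n (by omega)
    have h3 := hsq n hn
    nlinarith

lemma qden_grow {c d : ℕ → ℤ} {L : ℕ} (h2 : ∀ j < L, 2 ≤ c j)
    (hs : ∀ j < L, d j = 1 ∨ d j = -1) (hsq : ∀ j, j + 1 < L → c j ^ 2 ≤ c (j + 1)) :
    ∀ n < L, c 0 * qden c d L 0 ≤ 2 * (c n - 1) * qden c d L n := by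
  intro n
  induction n with
  | zero =>
    intro h0
    have := h2 0 h0
    have := qden_one_le h2 hs 0
    nlinarith
  | succ n ih =>
    intro hn
    have h1 := ih (by omega)
    have h2n := h2 n (by omega)
    have hb := (qden_bounds h2 hs (by omega : n < L)).2
    have hq := hsq n hn
    have i1 := qden_one_le h2 hs (n + 1)
    nlinarith [qden_one_le h2 hs n]

lemma qden_ge_c0 {c d : ℕ → ℤ} {L : ℕ} (hL : 1 ≤ L) (h2 : ∀ j < L, 2 ≤ c j)
    (hs : ∀ j < L, d j = 1 ∨ d j = -1) (hsq : ∀ j, j + 1 < L → c j ^ 2 ≤ c (j + 1)) :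
    c 0 ≤ qden c d L 0 := by
  rcases eq_or_lt_of_le hL with h1 | h1
  · rw [qden_last c d (show 0 + 1 = L by omega)]
  · have hrec := qden_rec c d (L := L) (n := 0) (by omega)
    have i1 := qden_one_le h2 hs 1
    have i2 := qden_mono h2 hs 1
    have hb := (qden_bounds h2 hs (by omega : 1 < L)).1
    have i3 := qden_one_le h2 hs 2
    have hc0 := h2 0 (by omega)
    have hc1 := h2 1 h1
    have hq := hsq 0 h1
    -- Q0 = c0 Q1 + d1 Q2 ≥ c0 Q1 - Q1 = (c0-1) Q1, Q1 ≥ c1 - 1 ≥ c0^2 - 1 ≥ 3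
    have hQ1 : c 1 - 1 ≤ qden c d L 1 := by
      have := (qden_bounds h2 hs h1).1
      nlinarith
    rcases hs 1 h1 with hd | hd <;> rw [hd] at hrec <;> nlinarith


lemma scf_rec (c d : ℕ → ℤ) {L n : ℕ} (h : n < L) :
    scf c d n (L - n) = (d n : ℝ) / ((c n : ℝ) + scf c d (n + 1) (L - (n + 1))) := by
  have h1 : L - n = (L - (n + 1)) + 1 := by omega
  rw [h1]
  rfl

lemma scf_val {c d : ℕ → ℤ} {L : ℕ} (h2 : ∀ j < L, 2 ≤ c j)
    (hs : ∀ j < L, d j = 1 ∨ d j = -1) :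
    ∀ t n, n + t = L → n < L →
      scf c d n (L - n) = (d n : ℝ) * (qden c d L (n + 1) : ℝ) / (qden c d L n : ℝ) := by
  intro t
  induction t with
  | zero => intro n h hn; omega
  | succ t ih =>
    intro n h hn
    rw [scf_rec c d hn]
    rcases eq_or_lt_of_le (by omega : n + 1 ≤ L) with h1 | h1
    · have : L - (n + 1) = 0 := by omega
      rw [this]
      show (d n : ℝ) / ((c n : ℝ) + 0) = _
      rw [qden_last c d h1, qden_top c d (by omega)]
      push_cast
      ring
    · rw [ih (n + 1) (by omega) h1]
      have hrec := qden_rec c d (L := L) (n := n) (by omega)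
      have i1 := qden_one_le h2 hs (n + 1)
      have i0 := qden_one_le h2 hs n
      have i2 := qden_one_le h2 hs (n + 2)
      have i3 := qden_mono h2 hs (n + 1)
      have hcn := h2 n hn
      have hd1 : (d (n+1) : ℝ) = 1 ∨ (d (n+1) : ℝ) = -1 := by
        rcases hs (n + 1) (by omega) with hd | hd <;> rw [hd] <;> simp
      have hq1 : (0 : ℝ) < (qden c d L (n + 1) : ℝ) := by exact_mod_cast i1
      have hq0 : (0 : ℝ) < (qden c d L n : ℝ) := by exact_mod_cast i0
      have hden : (c n : ℝ) + (d (n+1) : ℝ) * (qden c d L (n + 2) : ℝ) / (qden c d L (n + 1) : ℝ) =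
          (qden c d L n : ℝ) / (qden c d L (n + 1) : ℝ) := by
        rw [eq_div_iff (ne_of_gt hq1)]
        have : (qden c d L n : ℝ) = (c n : ℝ) * (qden c d L (n+1) : ℝ) + (d (n+1) : ℝ) * (qden c d L (n+2) : ℝ) := by
          exact_mod_cast congrArg (fun x : ℤ => (x : ℝ)) hrec
        rw [this]; field_simp
      rw [hden, div_div_eq_mul_div]


lemma nearestInt_int_add (A : ℤ) {t : ℝ} (ht : |t| < 1 / 2) :
    nearestInt ((A : ℝ) + t) = A := by
  rw [abs_lt] at ht
  unfold nearestInt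
  split_ifs with h
  · have : (A : ℝ) + t - 1 / 2 = (t - 1 / 2) + A := by ring
    rw [this, Int.ceil_add_intCast]
    have : ⌈t - 1 / 2⌉ = 0 := by
      rw [Int.ceil_eq_zero_iff]
      constructor
      · simp; linarith
      · simp; linarith
    omega
  · have : (A : ℝ) + t + 1 / 2 = (t + 1 / 2) + A := by ring
    rw [this, Int.floor_add_intCast]
    have : ⌊t + 1 / 2⌋ = 0 := by
      rw [Int.floor_eq_zero_iff]
      constructor
      · simp; linarith
      · simp; linarith
    omega

lemma abs_le_iff_normSq {w : ℂ} {y : ℝ} (hy : 0 ≤ y) :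
    ‖w‖ ≤ y ↔ Complex.normSq w ≤ y ^ 2 := by
  rw [← Complex.sq_norm]
  constructor
  · intro h; exact pow_le_pow_left₀ (norm_nonneg w) h 2
  · intro h
    nlinarith [norm_nonneg w]

lemma disk_mem_iff {w : ℂ} {x y : ℝ} (hy : 0 ≤ y) :
    ‖w - ((x : ℂ) - Complex.I * (y : ℂ))‖ ≤ y ↔
      (w.re - x) ^ 2 + (w.im + y) ^ 2 ≤ y ^ 2 := by
  rw [abs_le_iff_normSq hy, Complex.normSq_apply]
  simp [Complex.sub_re, Complex.sub_im, Complex.mul_re, Complex.mul_im]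
  ring_nf

lemma disk_ne_zero {w : ℂ} {x y : ℝ} (hx : x ≠ 0) (hy : 0 ≤ y)
    (hw : ‖w - ((x : ℂ) - Complex.I * (y : ℂ))‖ ≤ y) : w ≠ 0 := by
  rw [disk_mem_iff hy] at hw
  intro h
  rw [h] at hw
  simp at hw
  exact hx hw


lemma moebius_disk {w : ℂ} {x y : ℝ} (hx : x ≠ 0) (hy : 0 < y)
    (hw : ‖w - ((x : ℂ) - Complex.I * (y : ℂ))‖ ≤ y) :
    ‖(-1 / w) - (((-1 / x : ℝ) : ℂ) - Complex.I * ((y / x ^ 2 : ℝ) : ℂ))‖ ≤ y / x ^ 2 := by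
  have hw0 : w ≠ 0 := disk_ne_zero hx hy.le hw
  have hxC : (x : ℂ) ≠ 0 := by exact_mod_cast hx
  have hx2 : (0 : ℝ) < x ^ 2 := by positivity
  have hwpos : 0 < ‖w‖ := by simpa using hw0
  have hE : (-1 / w) - (((-1 / x : ℝ) : ℂ) - Complex.I * ((y / x ^ 2 : ℝ) : ℂ)) =
      (((x : ℂ) + Complex.I * (y : ℂ)) * w - (x : ℂ) ^ 2) / (((x : ℂ) ^ 2) * w) := by
    push_cast
    field_simp
    ring
  have habs : ‖(x : ℂ) ^ 2 * w‖ = x ^ 2 * ‖w‖ := by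
    rw [norm_mul, norm_pow, Complex.norm_real, Real.norm_eq_abs, sq_abs]
  have goal2 : ‖((x : ℂ) + Complex.I * (y : ℂ)) * w - (x : ℂ) ^ 2‖ ≤
      y * ‖w‖ := by
    rw [abs_le_iff_normSq (by positivity)]
    have hR : (y * ‖w‖) ^ 2 = y ^ 2 * Complex.normSq w := by
      rw [mul_pow, Complex.sq_norm]
    rw [hR]
    rw [disk_mem_iff hy.le] at hw
    have hmul := mul_le_mul_of_nonneg_left hw hx2.le
    simp only [Complex.normSq_apply, pow_two, Complex.sub_re, Complex.sub_im, Complex.mul_re,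
      Complex.mul_im, Complex.add_re, Complex.add_im, Complex.I_re, Complex.I_im,
      Complex.ofReal_re, Complex.ofReal_im]
    nlinarith [hmul]
  rw [hE, norm_div, habs, div_le_div_iff₀ (by positivity) hx2]
  nlinarith [goal2]

lemma disk_coords {w : ℂ} {x y : ℝ} (hy : 0 ≤ y)
    (hw : ‖w - ((x : ℂ) - Complex.I * (y : ℂ))‖ ≤ y) :
    |w.re - x| ≤ y ∧ |w.im + y| ≤ y := by
  rw [disk_mem_iff hy] at hw
  constructor <;> rw [abs_le] <;> constructor <;>
    nlinarith [sq_nonneg (w.re - x), sq_nonneg (w.im + y)]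

lemma disk_abs_le {w : ℂ} {x y : ℝ} (hy : 0 ≤ y)
    (hw : ‖w - ((x : ℂ) - Complex.I * (y : ℂ))‖ ≤ y) :
    ‖w‖ ≤ |x| + 3 * y := by
  obtain ⟨h1, h2⟩ := disk_coords hy hw
  calc ‖w‖ ≤ |w.re| + |w.im| := Complex.norm_le_abs_re_add_abs_im w
    _ ≤ (|x| + y) + 2 * y := by
        gcongr ?_ + ?_
        · have := abs_sub_abs_le_abs_sub w.re x
          have h3 : |w.re| - |x| ≤ y := le_trans this h1
          linarith [abs_nonneg (w.re)]
        · rw [abs_le] at h2 ⊢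
          constructor <;> linarith
    _ = |x| + 3 * y := by ring

lemma disk_cone {w : ℂ} {x y : ℝ} (hy : 0 ≤ y) (h3 : 3 * y ≤ |x|)
    (hw : ‖w - ((x : ℂ) - Complex.I * (y : ℂ))‖ ≤ y) :
    |w.im| ≤ |w.re| := by
  obtain ⟨h1, h2⟩ := disk_coords hy hw
  have hre : 2 * y ≤ |w.re| := by
    have h4 := abs_sub_abs_le_abs_sub x w.re
    rw [abs_sub_comm] at h4
    linarith
  have him : |w.im| ≤ 2 * y := by
    rw [abs_le] at h2 ⊢
    constructor <;> linarith
  linarith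


section
variable (N : ℕ) (m : ℕ → ℕ) (b ε : ℕ → ℕ → ℤ)
variable (hm : ∀ i, 1 ≤ m i) (hb2 : ∀ i, ∀ j < m i, 2 ≤ b i j)
variable (hε : ∀ i, ∀ j < m i, ε i j = 1 ∨ ε i j = -1)
variable (hb00 : (N : ℤ) ≤ b 0 0)
variable (hbsq : ∀ i, ∀ j, j + 1 < m i → (b i j) ^ 2 ≤ b i (j + 1))
variable (hq : ∀ i, (scfDen (b i) (ε i) (m i + 1)) ^ 2 ≤ b (i + 1) 0)

include hm hb2 hε hb00 hbsq hq in
lemma cross_block :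
    ∀ i, (N : ℤ) * (∏ l ∈ Finset.range i, scfDen (b l) (ε l) (m l + 1)) ≤ b i 0 := by
  intro i
  induction i with
  | zero => simpa using hb00
  | succ i ih =>
    have hQ : scfDen (b i) (ε i) (m i + 1) = qden (b i) (ε i) (m i) 0 :=
      (qden_zero (b i) (ε i) (m i)).symm
    have hQ1 : 1 ≤ qden (b i) (ε i) (m i) 0 := qden_one_le (hb2 i) (hε i) 0
    have hQc : b i 0 ≤ qden (b i) (ε i) (m i) 0 :=
      qden_ge_c0 (hm i) (hb2 i) (hε i) (hbsq i)
    have hk1 : (1 : ℤ) ≤ ∏ l ∈ Finset.range i, scfDen (b l) (ε l) (m l + 1) := by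
      have hpos : (0 : ℤ) < ∏ l ∈ Finset.range i, scfDen (b l) (ε l) (m l + 1) := by
        apply Finset.prod_pos
        intro l _
        rw [(qden_zero (b l) (ε l) (m l)).symm]
        exact lt_of_lt_of_le zero_lt_one (qden_one_le (hb2 l) (hε l) 0)
      omega
    have hqi := hq i
    rw [Finset.prod_range_succ]
    rw [hQ] at hqi ⊢
    set Qi := qden (b i) (ε i) (m i) 0
    set ki := ∏ l ∈ Finset.range i, scfDen (b l) (ε l) (m l + 1)
    -- N * (ki * Qi) ≤ (b i 0) * Qi ≤ Qi * Qi ≤ b (i+1) 0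
    have h1 : (N : ℤ) * (ki * Qi) = ((N : ℤ) * ki) * Qi := by ring
    nlinarith
end


set_option maxHeartbeats 2000000 in
lemma block_lemma (r : ℝ) (N : ℕ) (hN4 : 4 ≤ N) (hNr : 2 / ((N : ℝ) - 1) ≤ r)
    (c d : ℕ → ℤ) (L : ℕ) (hL : 1 ≤ L)
    (h2 : ∀ j < L, 2 ≤ c j) (hs : ∀ j < L, d j = 1 ∨ d j = -1)
    (hsq : ∀ j, j + 1 < L → c j ^ 2 ≤ c (j + 1))
    (K : ℝ) (hK1 : 1 ≤ K) (hKc : (N : ℝ) * K ≤ (c 0 : ℝ))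
    (z : ℂ)
    (hz : ‖z - (Complex.ofReal (scf c d 0 L) -
        Complex.I * Complex.ofReal ((K / (scfDen c d (L + 1) : ℝ)) * (Real.log 2 / (2 * π))))‖ ≤
      (Real.log 2 / (2 * π)) * (K / (scfDen c d (L + 1) : ℝ))) :
    ((∀ n : ℕ, n + 2 ≤ L →
        (∀ k < n, mGaussC^[k] z ≠ 0) ∧
        ‖mGaussC^[n] z‖ ≤ r ∧
        |(mGaussC^[n] z).im| ≤ |(mGaussC^[n] z).re|) ∧
      (∀ k < L - 1, mGaussC^[k] z ≠ 0) ∧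
      ‖mGaussC^[L - 1] z‖ ≤ r) := by
  -- the constant
  set C : ℝ := Real.log 2 / (2 * π) with hCdef
  have hpi : (3 : ℝ) < π := pi_gt_three
  have hlog2 : (0 : ℝ) < Real.log 2 := Real.log_pos (by norm_num)
  have hlog2' : Real.log 2 ≤ 1 := by
    have := Real.log_le_sub_one_of_pos (by norm_num : (0:ℝ) < 2)
    linarith
  have hC : 0 < C := by
    apply div_pos hlog2; linarith
  have hC6 : C ≤ 1 / 6 := by
    rw [hCdef, div_le_div_iff₀ (by linarith) (by norm_num)]
    nlinarith
  -- notation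
  set Q : ℕ → ℤ := qden c d L with hQdef
  set v : ℕ → ℝ := fun n => scf c d n (L - n) with hvdef
  set y : ℕ → ℝ := fun n => K * C * (Q 0 : ℝ) / ((Q n : ℝ)) ^ 2 with hydef
  have hQ1 : ∀ n, (1 : ℝ) ≤ (Q n : ℝ) := by
    intro n; exact_mod_cast qden_one_le h2 hs n
  have hQpos : ∀ n, (0 : ℝ) < (Q n : ℝ) := fun n => lt_of_lt_of_le one_pos (hQ1 n)
  have hq1 : (1 : ℝ) ≤ (Q 0 : ℝ) := hQ1 0
  have hNR : (4 : ℝ) ≤ (N : ℝ) := by exact_mod_cast hN4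
  have hc0 : (N : ℝ) ≤ (c 0 : ℝ) := le_trans (by nlinarith) hKc
  have hcge : ∀ n < L, (N : ℝ) ≤ (c n : ℝ) := by
    intro n hn
    have := c_chain h2 hsq n hn
    have : ((c 0 : ℤ) : ℝ) ≤ ((c n : ℤ) : ℝ) := by exact_mod_cast this
    linarith
  have hQmono : ∀ n, (Q (n + 1) : ℝ) ≤ (Q n : ℝ) := by
    intro n; exact_mod_cast qden_mono h2 hs n
  have hvq : ∀ n < L, v n = (d n : ℝ) * (Q (n + 1) : ℝ) / (Q n : ℝ) := by
    intro n hn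
    exact scf_val h2 hs (L - n) n (by omega) hn
  have hdpm : ∀ n < L, (d n : ℝ) = 1 ∨ (d n : ℝ) = -1 := by
    intro n hn; rcases hs n hn with h | h <;> [left; right] <;> rw [h] <;> simp
  have hvabs : ∀ n < L, |v n| = (Q (n + 1) : ℝ) / (Q n : ℝ) := by
    intro n hn
    rw [hvq n hn, abs_div, abs_mul]
    rcases hdpm n hn with h | h <;> rw [h] <;>
      rw [abs_of_pos (hQpos (n+1)), abs_of_pos (hQpos n)] <;> norm_num
  have hvne : ∀ n < L, v n ≠ 0 := by
    intro n hn h0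
    have h1 := hvabs n hn
    rw [h0, abs_zero] at h1
    have hp := div_pos (hQpos (n + 1)) (hQpos n)
    rw [← h1] at hp
    exact lt_irrefl _ hp
  have hvub : ∀ n < L, |v n| ≤ 1 / ((c n : ℝ) - 1) := by
    intro n hn
    have hb := (qden_bounds h2 hs hn).1
    have hbR : ((c n : ℝ) - 1) * (Q (n + 1) : ℝ) ≤ (Q n : ℝ) := by exact_mod_cast hb
    have hcn : (2 : ℝ) ≤ (c n : ℝ) := by exact_mod_cast h2 n hn
    rw [hvabs n hn, div_le_div_iff₀ (hQpos n) (by linarith)]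
    nlinarith [hQ1 (n + 1)]
  have hvlb : ∀ n < L, 1 / ((c n : ℝ) + 1) ≤ |v n| := by
    intro n hn
    have hb := (qden_bounds h2 hs hn).2
    have hbR : (Q n : ℝ) ≤ ((c n : ℝ) + 1) * (Q (n + 1) : ℝ) := by exact_mod_cast hb
    have hcn : (2 : ℝ) ≤ (c n : ℝ) := by exact_mod_cast h2 n hn
    rw [hvabs n hn, div_le_div_iff₀ (by linarith) (hQpos n)]
    nlinarith [hQ1 (n + 1)]
  have hypos : ∀ n, 0 < y n := by
    intro n
    apply div_pos
    · have hK0 : (0 : ℝ) < K := by linarith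
      exact mul_pos (mul_pos hK0 hC) (hQpos 0)
    · exact pow_pos (hQpos n) 2
  have hysmall : ∀ n < L, y n ≤ 2 * C / (N : ℝ) := by
    intro n hn
    have hg := qden_grow h2 hs hsq n hn
    have hgR : (c 0 : ℝ) * (Q 0 : ℝ) ≤ 2 * ((c n : ℝ) - 1) * (Q n : ℝ) := by exact_mod_cast hg
    have hb := (qden_bounds h2 hs hn).1
    have hbR : ((c n : ℝ) - 1) * (Q (n + 1) : ℝ) ≤ (Q n : ℝ) := by exact_mod_cast hb
    have hcn : (2 : ℝ) ≤ (c n : ℝ) := by exact_mod_cast h2 n hn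
    have hQn : (c n : ℝ) - 1 ≤ (Q n : ℝ) := by nlinarith [hQ1 (n + 1)]
    -- y n = K*C*q/(Q n)^2 ≤ 2*K*C*(c n - 1)/(c 0 * Q n) ≤ 2*K*C/c 0 ≤ 2*C/N
    have h1 : y n ≤ 2 * K * C / (c 0 : ℝ) := by
      rw [hydef]
      rw [div_le_div_iff₀ (pow_pos (hQpos n) 2) (by linarith)]
      have e1 : K * C * (Q 0 : ℝ) * (c 0 : ℝ) = (K * C) * ((c 0 : ℝ) * (Q 0 : ℝ)) := by ring
      calc K * C * (Q 0 : ℝ) * (c 0 : ℝ) = (K * C) * ((c 0 : ℝ) * (Q 0 : ℝ)) := by ring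
        _ ≤ (K * C) * (2 * ((c n : ℝ) - 1) * (Q n : ℝ)) := by
            apply mul_le_mul_of_nonneg_left hgR (by nlinarith)
        _ ≤ (K * C) * (2 * (Q n : ℝ) * (Q n : ℝ)) := by
            apply mul_le_mul_of_nonneg_left _ (by nlinarith)
            nlinarith [hQpos n]
        _ = 2 * K * C * (Q n : ℝ) ^ 2 := by ring
    have h2' : 2 * K * C / (c 0 : ℝ) ≤ 2 * C / (N : ℝ) := by
      rw [div_le_div_iff₀ (by linarith) (by linarith)]
      nlinarith
    linarith
  have hycone : ∀ n, n + 2 ≤ L → 3 * y n ≤ |v n| := by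
    intro n hn
    have hg := qden_grow h2 hs hsq (n + 1) (by omega)
    have hgR : (c 0 : ℝ) * (Q 0 : ℝ) ≤ 2 * ((c (n + 1) : ℝ) - 1) * (Q (n + 1) : ℝ) := by exact_mod_cast hg
    have hb := (qden_bounds h2 hs (show n + 1 < L by omega)).1
    have hbR : ((c (n + 1) : ℝ) - 1) * (Q (n + 2) : ℝ) ≤ (Q (n + 1) : ℝ) := by exact_mod_cast hb
    have hcn : (2 : ℝ) ≤ (c (n + 1) : ℝ) := by exact_mod_cast h2 (n + 1) (by omega)
    have hQn1 : (c (n + 1) : ℝ) - 1 ≤ (Q (n + 1) : ℝ) := by nlinarith [hQ1 (n + 2)]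
    have hqle : (Q 0 : ℝ) * (c 0 : ℝ) ≤ 2 * (Q (n + 1) : ℝ) ^ 2 := by
      nlinarith [hQpos (n + 1)]
    rw [hvabs n (by omega)]
    simp only [hydef]
    rw [show 3 * (K * C * (Q 0 : ℝ) / (Q n : ℝ) ^ 2) = (3 * (K * C * (Q 0 : ℝ))) / (Q n : ℝ) ^ 2 from by ring]
    rw [div_le_div_iff₀ (pow_pos (hQpos n) 2) (hQpos n)]
    -- 3*(K*C*q)*(Q n) ≤ (Q (n+1)) * (Q n)^2  ⟸ 3*K*C*q ≤ Q(n+1)*Q n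
    have key : 3 * (K * C * (Q 0 : ℝ)) ≤ (Q (n + 1) : ℝ) * (Q n : ℝ) := by
      have hKC : (0 : ℝ) ≤ 3 * (K * C) := by nlinarith
      have h6 : 6 * K * C ≤ (c 0 : ℝ) := by nlinarith
      have h1 : 3 * (K * C * (Q 0 : ℝ)) * (c 0 : ℝ) ≤ 6 * K * C * (Q (n + 1) : ℝ) ^ 2 := by
        nlinarith [mul_le_mul_of_nonneg_left hqle hKC]
      have h2' : 6 * K * C * (Q (n + 1) : ℝ) ^ 2 ≤ (c 0 : ℝ) * ((Q (n + 1) : ℝ) * (Q n : ℝ)) := by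
        nlinarith [mul_le_mul_of_nonneg_right h6 (sq_nonneg ((Q (n + 1) : ℝ))),
          mul_le_mul_of_nonneg_left (hQmono n) (mul_nonneg (by linarith [hc0, hNR] : (0:ℝ) ≤ (c 0 : ℝ)) (hQpos (n + 1)).le)]
      nlinarith [hc0, hNR]
    nlinarith [hQpos n, hQpos (n + 1)]
  have hyrel : ∀ n < L, y (n + 1) = y n / (v n) ^ 2 := by
    intro n hn
    have hv2 : (v n) ^ 2 = (Q (n + 1) : ℝ) ^ 2 / (Q n : ℝ) ^ 2 := by
      rw [hvq n hn]
      rw [div_pow, mul_pow]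
      rcases hdpm n hn with h | h <;> rw [h] <;> norm_num
    have hQn0 : (Q n : ℝ) ≠ 0 := (hQpos n).ne'
    have hQn10 : (Q (n + 1) : ℝ) ≠ 0 := (hQpos (n + 1)).ne'
    simp only [hydef, hv2]
    rw [div_div_eq_mul_div]
    field_simp
  -- the invariant
  have hstep : ∀ n, n + 2 ≤ L →
      (∃ σ : ℤ, (σ = 1 ∨ σ = -1) ∧
        ‖mGaussC^[n] z -
          (Complex.ofReal ((σ : ℝ) * v n) - Complex.I * Complex.ofReal (y n))‖ ≤ y n) →
      ∃ σ : ℤ, (σ = 1 ∨ σ = -1) ∧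
        ‖mGaussC^[n + 1] z -
          (Complex.ofReal ((σ : ℝ) * v (n + 1)) - Complex.I * Complex.ofReal (y (n + 1)))‖ ≤
          y (n + 1) := by
    intro n hn ⟨σ, hσ, hw⟩
    set w : ℂ := mGaussC^[n] z with hwdef
    set x : ℝ := (σ : ℝ) * v n with hxdef
    have hσR : (σ : ℝ) = 1 ∨ (σ : ℝ) = -1 := by
      rcases hσ with h | h <;> [left; right] <;> rw [h] <;> simp
    have hσ2 : ((σ : ℝ)) ^ 2 = 1 := by rcases hσR with h | h <;> rw [h] <;> norm_num
    have hxne : x ≠ 0 := by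
      rw [hxdef]
      rcases hσR with h | h <;> rw [h] <;> simpa using hvne n (by omega)
    have hx2 : x ^ 2 = (v n) ^ 2 := by rw [hxdef, mul_pow, hσ2, one_mul]
    have hyx : y n / x ^ 2 = y (n + 1) := by rw [hx2, ← hyrel n (by omega)]
    have hmo := moebius_disk hxne (hypos n) hw
    rw [hyx] at hmo
    -- the new sign and integer part
    set σ' : ℤ := -σ * d n with hσ'def
    set A : ℤ := -σ * d n * c n with hAdef
    have hσ'pm : σ' = 1 ∨ σ' = -1 := by
      rcases hσ with h | h <;> rcases hs n (by omega) with h' | h' <;>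
        rw [hσ'def, h, h'] <;> [right; left; left; right] <;> ring
    have hvrec : v n = (d n : ℝ) / ((c n : ℝ) + v (n + 1)) := scf_rec c d (by omega)
    have hden : (1 : ℝ) ≤ (c n : ℝ) + v (n + 1) := by
      have h1 := hvub (n + 1) (by omega)
      have hcn1 : (4 : ℝ) ≤ (c (n + 1) : ℝ) := le_trans hNR (hcge (n + 1) (by omega))
      have h2' : |v (n + 1)| ≤ 1 := by
        refine le_trans h1 ?_
        rw [div_le_one (by linarith)]
        linarith
      have hcn : (2 : ℝ) ≤ (c n : ℝ) := by exact_mod_cast h2 n (by omega)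
      rw [abs_le] at h2'
      linarith
    have hkey : -1 / x = ((A : ℤ) : ℝ) + ((σ' : ℤ) : ℝ) * v (n + 1) := by
      have hvne' := hvne n (by omega)
      rw [hxdef, hvrec] at *
      rcases hσ with h | h <;> rcases hs n (by omega) with h' | h' <;>
        rw [hσ'def, hAdef, h, h'] <;> push_cast <;> field_simp <;> ring
    -- the nearest integer of Re(-1/w) is A
    have hwre := (disk_coords (hypos (n + 1)).le hmo).1
    have hv1 : |v (n + 1)| ≤ 1 / 3 := by
      have h1 := hvub (n + 1) (by omega)
      have hcn1 : (4 : ℝ) ≤ (c (n + 1) : ℝ) := le_trans hNR (hcge (n + 1) (by omega))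
      refine le_trans h1 ?_
      rw [div_le_div_iff₀ (by linarith) (by norm_num)]
      linarith
    have hy1 : y (n + 1) ≤ 1 / 12 := by
      have h1 := hysmall (n + 1) (by omega)
      have h2' : 2 * C / (N : ℝ) ≤ 1 / 12 := by
        rw [div_le_div_iff₀ (by linarith) (by norm_num)]
        nlinarith
      linarith
    have hσ'R : |((σ' : ℤ) : ℝ)| = 1 := by
      rcases hσ'pm with h | h <;> rw [h] <;> simp
    have ht : |(-1 / w).re - ((A : ℤ) : ℝ)| < 1 / 2 := by
      have e : (-1 / w).re - ((A : ℤ) : ℝ) =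
          ((-1 / w).re - (-1 / x)) + ((σ' : ℤ) : ℝ) * v (n + 1) := by
        rw [hkey]; ring
      rw [e]
      calc |((-1 / w).re - (-1 / x)) + ((σ' : ℤ) : ℝ) * v (n + 1)|
          ≤ |(-1 / w).re - (-1 / x)| + |((σ' : ℤ) : ℝ) * v (n + 1)| := abs_add_le _ _
        _ ≤ y (n + 1) + |v (n + 1)| := by
            rw [abs_mul, hσ'R, one_mul]
            gcongr
        _ < 1 / 2 := by linarith
    have hnear : nearestInt ((-1 / w).re) = A := by
      have e : (-1 / w).re = ((A : ℤ) : ℝ) + ((-1 / w).re - ((A : ℤ) : ℝ)) := by ring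
      rw [e]
      exact nearestInt_int_add A ht
    have hG : mGaussC w = -1 / w - ((A : ℤ) : ℂ) := by
      rw [mGaussC, hnear]
    refine ⟨σ', hσ'pm, ?_⟩
    have e3 : mGaussC^[n + 1] z -
        (Complex.ofReal (((σ' : ℤ) : ℝ) * v (n + 1)) - Complex.I * Complex.ofReal (y (n + 1))) =
        (-1 / w) - (Complex.ofReal (-1 / x) - Complex.I * Complex.ofReal (y (n + 1))) := by
      rw [Function.iterate_succ_apply', ← hwdef, hG, hkey]
      push_cast
      ring
    rw [e3]
    exact hmo
  have hInv : ∀ n, n + 1 ≤ L →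
      ∃ σ : ℤ, (σ = 1 ∨ σ = -1) ∧
        ‖mGaussC^[n] z -
          (Complex.ofReal ((σ : ℝ) * v n) - Complex.I * Complex.ofReal (y n))‖ ≤ y n := by
    intro n
    induction n with
    | zero =>
      intro _
      refine ⟨1, Or.inl rfl, ?_⟩
      have hQ0 : (scfDen c d (L + 1) : ℝ) = (Q 0 : ℝ) := by
        rw [hQdef, qden_zero]
      have hv0 : scf c d 0 L = v 0 := rfl
      have hy0 : K / (Q 0 : ℝ) * C = y 0 := by
        have : (Q 0 : ℝ) ≠ 0 := (hQpos 0).ne'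
        simp only [hydef]
        field_simp
      have hy0' : C * (K / (Q 0 : ℝ)) = y 0 := by rw [← hy0]; ring
      rw [hQ0, hv0, hy0, hy0'] at hz
      simpa using hz
    | succ n ih =>
      intro hn
      exact hstep n (by omega) (ih (by omega))
  -- extraction
  have hne : ∀ k, k < L →
      (∃ σ : ℤ, (σ = 1 ∨ σ = -1) ∧
        ‖mGaussC^[k] z -
          (Complex.ofReal ((σ : ℝ) * v k) - Complex.I * Complex.ofReal (y k))‖ ≤ y k) →
      mGaussC^[k] z ≠ 0 := by
    intro k hk ⟨σ, hσ, hw⟩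
    have hσR : (σ : ℝ) = 1 ∨ (σ : ℝ) = -1 := by
      rcases hσ with h | h <;> [left; right] <;> rw [h] <;> simp
    have hxne : (σ : ℝ) * v k ≠ 0 := by
      rcases hσR with h | h <;> rw [h] <;> simpa using hvne k hk
    exact disk_ne_zero hxne (hypos k).le hw
  have habs_le : ∀ k, k < L →
      (∃ σ : ℤ, (σ = 1 ∨ σ = -1) ∧
        ‖mGaussC^[k] z -
          (Complex.ofReal ((σ : ℝ) * v k) - Complex.I * Complex.ofReal (y k))‖ ≤ y k) →
      ‖mGaussC^[k] z‖ ≤ r := by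
    intro k hk ⟨σ, hσ, hw⟩
    have hσR : (σ : ℝ) = 1 ∨ (σ : ℝ) = -1 := by
      rcases hσ with h | h <;> [left; right] <;> rw [h] <;> simp
    have hxa : |(σ : ℝ) * v k| = |v k| := by
      rw [abs_mul]
      rcases hσR with h | h <;> rw [h] <;> simp
    have h1 := disk_abs_le (hypos k).le hw
    rw [hxa] at h1
    have hck : (4 : ℝ) ≤ (c k : ℝ) := le_trans hNR (hcge k hk)
    have h2' : |v k| ≤ 1 / ((N : ℝ) - 1) := by
      refine le_trans (hvub k hk) ?_
      rw [div_le_div_iff₀ (by linarith [hcge k hk]) (by linarith)]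
      linarith [hcge k hk]
    have h3 : y k ≤ 2 * C / (N : ℝ) := hysmall k hk
    have h4 : 3 * y k ≤ 1 / ((N : ℝ) - 1) := by
      have : 6 * C / (N : ℝ) ≤ 1 / ((N : ℝ) - 1) := by
        rw [div_le_div_iff₀ (by linarith) (by linarith)]
        nlinarith
      calc 3 * y k ≤ 3 * (2 * C / (N : ℝ)) := by linarith
        _ = 6 * C / (N : ℝ) := by ring
        _ ≤ 1 / ((N : ℝ) - 1) := this
    calc ‖mGaussC^[k] z‖ ≤ |v k| + 3 * y k := h1
      _ ≤ 1 / ((N : ℝ) - 1) + 1 / ((N : ℝ) - 1) := by linarith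
      _ = 2 / ((N : ℝ) - 1) := by ring
      _ ≤ r := hNr
  refine ⟨?_, ?_, ?_⟩
  · intro n hn
    refine ⟨fun k hk => hne k (by omega) (hInv k (by omega)), ?_, ?_⟩
    · exact habs_le n (by omega) (hInv n (by omega))
    · obtain ⟨σ, hσ, hw⟩ := hInv n (by omega)
      have hσR : (σ : ℝ) = 1 ∨ (σ : ℝ) = -1 := by
        rcases hσ with h | h <;> [left; right] <;> rw [h] <;> simp
      have hxa : |(σ : ℝ) * v n| = |v n| := by
        rw [abs_mul]
        rcases hσR with h | h <;> rw [h] <;> simp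
      apply disk_cone (hypos n).le _ hw
      rw [hxa]
      exact hycone n hn
  · intro k hk
    exact hne k (by omega) (hInv k (by omega))
  · exact habs_le (L - 1) (by omega) (hInv (L - 1) (by omega))


/-- For every `r ∈ (0, 1/2)` there is `N ≥ 2` such that for every sequence of
rational numbers `⟨m_i : b_{i,j} : ε_{i,j}⟩` in the quadratic-growth class
`QG_N` (i.e. `b_{0,0} ≥ N`, `b_{i,j+1} ≥ b_{i,j}²` and `b_{i+1,0} ≥ q_i²`, where
`p_i/q_i = [⟨b_{i,j} : ε_{i,j}⟩_j]`, all indices 0-based), every `i`, and every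
`z` in the closed disk of radius `(log 2/(2π))·(k_i/q_i)` centered at
`p_i/q_i - 𝑖 (k_i/q_i)(log 2)/(2π)` (with `k_i = ∏_{l<i} q_l`):
(a) for `0 ≤ n ≤ m_i - 2` the iterate `G^n(z)` is defined (the orbit does not
pass through `0`), `|G^n(z)| ≤ r`, and `|Im G^n(z)| ≤ |Re G^n(z)|`;
(b) `G^{m_i - 1}(z)` is defined and `|G^{m_i - 1}(z)| ≤ r`. -/
theorem rationals_with_quadratic_growth (r : ℝ) (hr0 : 0 < r) (hr : r < 1 / 2) :
    ∃ N : ℕ, 2 ≤ N ∧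
      ∀ (m : ℕ → ℕ) (b ε : ℕ → ℕ → ℤ),
        (∀ i, 1 ≤ m i) →
        (∀ i, ∀ j < m i, 2 ≤ b i j) →
        (∀ i, ∀ j < m i, ε i j = 1 ∨ ε i j = -1) →
        ((N : ℤ) ≤ b 0 0) →
        (∀ i, ∀ j, j + 1 < m i → (b i j) ^ 2 ≤ b i (j + 1)) →
        (∀ i, (scfDen (b i) (ε i) (m i + 1)) ^ 2 ≤ b (i + 1) 0) →
        ∀ (i : ℕ) (z : ℂ),
          ‖z - (Complex.ofReal (scf (b i) (ε i) 0 (m i)) -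
              Complex.I * Complex.ofReal
                (((∏ l ∈ Finset.range i, (scfDen (b l) (ε l) (m l + 1) : ℝ)) /
                    (scfDen (b i) (ε i) (m i + 1) : ℝ)) * (Real.log 2 / (2 * π))))‖ ≤
            (Real.log 2 / (2 * π)) *
              ((∏ l ∈ Finset.range i, (scfDen (b l) (ε l) (m l + 1) : ℝ)) /
                (scfDen (b i) (ε i) (m i + 1) : ℝ)) →
          ((∀ n : ℕ, n + 2 ≤ m i →
              (∀ k < n, mGaussC^[k] z ≠ 0) ∧
              ‖mGaussC^[n] z‖ ≤ r ∧
              |(mGaussC^[n] z).im| ≤ |(mGaussC^[n] z).re|) ∧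
            (∀ k < m i - 1, mGaussC^[k] z ≠ 0) ∧
            ‖mGaussC^[m i - 1] z‖ ≤ r) := by
  refine ⟨⌈2 / r⌉₊ + 5, by omega, ?_⟩
  intro m b ε hm hb2 hε hb00 hbsq hq i z hz
  set N : ℕ := ⌈2 / r⌉₊ + 5 with hNdef
  have hN4 : 4 ≤ N := by omega
  have hceil : 2 / r ≤ (⌈2 / r⌉₊ : ℝ) := Nat.le_ceil _
  have hNR : 2 / r + 5 ≤ (N : ℝ) := by
    rw [hNdef]
    push_cast
    linarith
  have hr2 : 0 < 2 / r := by positivity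
  have hNr : 2 / ((N : ℝ) - 1) ≤ r := by
    rw [div_le_iff₀ (by linarith)]
    have h1 : 2 / r * r = 2 := div_mul_cancel₀ 2 hr0.ne'
    nlinarith
  have hcb := cross_block N m b ε hm hb2 hε hb00 hbsq hq i
  have hk1 : (1 : ℤ) ≤ ∏ l ∈ Finset.range i, scfDen (b l) (ε l) (m l + 1) := by
    have hpos : (0 : ℤ) < ∏ l ∈ Finset.range i, scfDen (b l) (ε l) (m l + 1) := by
      apply Finset.prod_pos
      intro l _
      rw [(qden_zero (b l) (ε l) (m l)).symm]
      exact lt_of_lt_of_le zero_lt_one (qden_one_le (hb2 l) (hε l) 0)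
    omega
  have hKprod : ((∏ l ∈ Finset.range i, scfDen (b l) (ε l) (m l + 1) : ℤ) : ℝ) =
      ∏ l ∈ Finset.range i, (scfDen (b l) (ε l) (m l + 1) : ℝ) := by
    push_cast
    rfl
  have hK1 : (1 : ℝ) ≤ ∏ l ∈ Finset.range i, (scfDen (b l) (ε l) (m l + 1) : ℝ) := by
    rw [← hKprod]
    exact_mod_cast hk1
  have hKc : (N : ℝ) * (∏ l ∈ Finset.range i, (scfDen (b l) (ε l) (m l + 1) : ℝ)) ≤
      (b i 0 : ℝ) := by
    rw [← hKprod]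
    exact_mod_cast hcb
  exact block_lemma r N hN4 hNr (b i) (ε i) (m i) (hm i) (hb2 i) (hε i) (hbsq i)
    (∏ l ∈ Finset.range i, (scfDen (b l) (ε l) (m l + 1) : ℝ)) hK1 hKc z hz
end

section
/- For all reals B₁ > 0 and K > 0 there exists a real B₄ ≥ 1 such that for all α, β ∈ ℂ satisfying: 0 < |α| ≤ 1/2, |Re α| ≥ |Im α|, β ≠ 0, Re β ∈ [−1/2, 1/2], |Im β| ≤ K, and |1/(1 − e^{2πiα}) + 1/(1 − e^{2πiβ})| ≤ B₁, one has |α|/B₄ ≤ |β| ≤ B₄ |α|. -/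
open Real

lemma sq_le_of_le_of_nonneg {a b : ℝ} (ha : 0 ≤ a) (hb : 0 ≤ b) (h : a ^ 2 ≤ b ^ 2) : a ≤ b := by
  have := Real.sqrt_le_sqrt h
  rwa [Real.sqrt_sq ha, Real.sqrt_sq hb] at this

lemma exp_prod_one (x : ℝ) : Real.exp (-x) * Real.exp x = 1 := by
  rw [← Real.exp_add]; simp

lemma exp_sub_one_upper {L x : ℝ} (hL : 0 ≤ L) (hx : |x| ≤ L) :
    |1 - Real.exp x| ≤ |x| * Real.exp L := by
  have hL1 : (1:ℝ) ≤ Real.exp L := by simpa using Real.exp_le_exp.2 hL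
  have hxL : Real.exp x ≤ Real.exp L := Real.exp_le_exp.2 (le_of_abs_le hx)
  rcases le_or_gt 0 x with h | h
  · have h2 : 0 ≤ Real.exp x - 1 := by nlinarith [Real.add_one_le_exp x]
    have h1 : Real.exp x - 1 ≤ x * Real.exp x := by
      nlinarith [Real.add_one_le_exp (-x), exp_prod_one x, Real.exp_pos x]
    rw [abs_of_nonpos (show 1 - Real.exp x ≤ 0 by linarith), abs_of_nonneg h]
    have : x * Real.exp x ≤ x * Real.exp L := by nlinarith
    linarith
  · have h2 : Real.exp x ≤ 1 := Real.exp_le_one_iff.2 h.le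
    rw [abs_of_nonneg (show (0:ℝ) ≤ 1 - Real.exp x by linarith), abs_of_neg h]
    nlinarith [Real.add_one_le_exp x]

lemma exp_sub_one_lower {L x : ℝ} (hL : 0 ≤ L) (hx : |x| ≤ L) :
    |x| * Real.exp (-L) ≤ |1 - Real.exp x| := by
  have hL1 : Real.exp (-L) ≤ 1 := by simpa using Real.exp_le_exp.2 (neg_nonpos.2 hL)
  have hxL : Real.exp (-L) ≤ Real.exp x := Real.exp_le_exp.2 (by cases abs_le.1 hx; linarith)
  rcases le_or_gt 0 x with h | h
  · have h2 : x ≤ Real.exp x - 1 := by linarith [Real.add_one_le_exp x]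
    rw [abs_of_nonpos (show 1 - Real.exp x ≤ 0 by linarith), abs_of_nonneg h]
    nlinarith
  · have h2 : Real.exp x ≤ 1 := Real.exp_le_one_iff.2 h.le
    have h1 : -x * Real.exp x ≤ 1 - Real.exp x := by
      nlinarith [Real.add_one_le_exp (-x), exp_prod_one x, Real.exp_pos x]
    rw [abs_of_nonneg (show (0:ℝ) ≤ 1 - Real.exp x by linarith), abs_of_neg h]
    nlinarith [Real.exp_pos x]

lemma abs_one_sub_exp_sq (w : ℂ) :
    ‖1 - Complex.exp w‖ ^ 2 =
      (1 - Real.exp w.re) ^ 2 + 2 * Real.exp w.re * (1 - Real.cos w.im) := by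
  rw [Complex.sq_norm, Complex.normSq_apply, Complex.sub_re, Complex.sub_im,
    Complex.exp_re, Complex.exp_im, Complex.one_re, Complex.one_im]
  linear_combination (Real.exp w.re) ^ 2 * (Real.sin_sq_add_cos_sq w.im)

lemma abs_w_sq (w : ℂ) : ‖w‖ ^ 2 = w.re ^ 2 + w.im ^ 2 := by
  rw [Complex.sq_norm, Complex.normSq_apply]; ring

lemma one_sub_exp_upper {L : ℝ} (hL : 0 ≤ L) {w : ℂ} (hx : |w.re| ≤ L) :
    ‖1 - Complex.exp w‖ ≤ Real.exp L * ‖w‖ := by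
  apply sq_le_of_le_of_nonneg (norm_nonneg _) (by positivity)
  rw [abs_one_sub_exp_sq, mul_pow, abs_w_sq]
  have hL1 : (1:ℝ) ≤ Real.exp L := by simpa using Real.exp_le_exp.2 hL
  have hxL : Real.exp w.re ≤ Real.exp L := Real.exp_le_exp.2 (le_of_abs_le hx)
  have hcos : 1 - Real.cos w.im ≤ w.im ^ 2 / 2 := by
    have := Real.one_sub_sq_div_two_le_cos (x := w.im); linarith
  have hcos0 : 0 ≤ 1 - Real.cos w.im := by linarith [Real.cos_le_one w.im]
  have hex : (1 - Real.exp w.re) ^ 2 ≤ Real.exp L ^ 2 * w.re ^ 2 := by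
    have h2 : (1 - Real.exp w.re) ^ 2 ≤ (|w.re| * Real.exp L) ^ 2 := by
      rw [← sq_abs (1 - Real.exp w.re)]
      exact pow_le_pow_left₀ (abs_nonneg _) (exp_sub_one_upper hL hx) 2
    rw [mul_pow, sq_abs] at h2; linarith
  have ht2 : 2 * Real.exp w.re * (1 - Real.cos w.im) ≤ 2 * Real.exp L * (w.im ^ 2 / 2) :=
    mul_le_mul (by linarith) hcos hcos0 (by positivity)
  have ht3 : 2 * Real.exp L * (w.im ^ 2 / 2) ≤ Real.exp L ^ 2 * w.im ^ 2 := by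
    have he : Real.exp L ≤ Real.exp L ^ 2 := by nlinarith [Real.exp_pos L]
    have := mul_le_mul_of_nonneg_right he (sq_nonneg w.im)
    linarith
  linarith

lemma one_sub_exp_lower {L : ℝ} (hL : 0 ≤ L) {w : ℂ} (hx : |w.re| ≤ L) (hy : |w.im| ≤ π) :
    Real.exp (-L) * (2 / π) * ‖w‖ ≤ ‖1 - Complex.exp w‖ := by
  have hπ : 0 < π := Real.pi_pos
  apply sq_le_of_le_of_nonneg (by positivity) (norm_nonneg _)
  rw [abs_one_sub_exp_sq, mul_pow, mul_pow, abs_w_sq]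
  have hL1 : Real.exp (-L) ≤ 1 := by simpa using Real.exp_le_exp.2 (neg_nonpos.2 hL)
  have hxL : Real.exp (-L) ≤ Real.exp w.re := Real.exp_le_exp.2 (by cases abs_le.1 hx; linarith)
  have hcos : 2 / π ^ 2 * w.im ^ 2 ≤ 1 - Real.cos w.im := by
    have := Real.cos_le_one_sub_mul_cos_sq hy; linarith
  have hex : Real.exp (-L) ^ 2 * w.re ^ 2 ≤ (1 - Real.exp w.re) ^ 2 := by
    have h2 : (|w.re| * Real.exp (-L)) ^ 2 ≤ (1 - Real.exp w.re) ^ 2 := by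
      rw [← sq_abs (1 - Real.exp w.re)]
      exact pow_le_pow_left₀ (by positivity) (exp_sub_one_lower hL hx) 2
    rw [mul_pow, sq_abs] at h2; linarith
  -- imaginary part:  e^{-L}² (2/π)² y² ≤ 2 e^{re} (2/π²) y² ≤ 2 e^{re} (1 - cos y)
  have him : Real.exp (-L) ^ 2 * (2 / π) ^ 2 * w.im ^ 2
      ≤ 2 * Real.exp w.re * (1 - Real.cos w.im) := by
    have hq : (2 / π) ^ 2 = 2 * (2 / π ^ 2) := by field_simp
    have he1 : Real.exp (-L) ^ 2 ≤ Real.exp w.re := by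
      nlinarith [Real.exp_pos (-L)]
    have step1 : Real.exp (-L) ^ 2 * (2 / π) ^ 2 * w.im ^ 2
        ≤ Real.exp w.re * (2 * (2 / π ^ 2)) * w.im ^ 2 := by
      rw [hq]
      have : Real.exp (-L) ^ 2 * (2 * (2 / π ^ 2)) ≤ Real.exp w.re * (2 * (2 / π ^ 2)) := by
        apply mul_le_mul_of_nonneg_right he1; positivity
      exact mul_le_mul_of_nonneg_right this (sq_nonneg w.im)
    have step2 : Real.exp w.re * (2 * (2 / π ^ 2)) * w.im ^ 2
        ≤ 2 * Real.exp w.re * (1 - Real.cos w.im) := by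
      have := mul_le_mul_of_nonneg_left hcos (le_of_lt (by positivity : (0:ℝ) < 2 * Real.exp w.re))
      calc Real.exp w.re * (2 * (2 / π ^ 2)) * w.im ^ 2
          = 2 * Real.exp w.re * (2 / π ^ 2 * w.im ^ 2) := by ring
        _ ≤ 2 * Real.exp w.re * (1 - Real.cos w.im) := this
    linarith
  have hre : Real.exp (-L) ^ 2 * (2 / π) ^ 2 * w.re ^ 2 ≤ Real.exp (-L) ^ 2 * w.re ^ 2 := by
    have hπ2 : (2 / π) ^ 2 ≤ 1 := by
      rw [div_pow, div_le_one (by positivity)]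
      nlinarith [Real.pi_gt_three]
    nlinarith [mul_nonneg (sq_nonneg (Real.exp (-L))) (sq_nonneg w.re)]
  linarith

lemma comp_aux {m M B₁ r x y : ℝ} (hm : 0 < m) (hM : 0 < M) (hB : 0 < B₁)
    (hx : 0 < x) (hy : 0 < y) (hyr : y ≤ r) (hr : 0 < r)
    (h : 1 / (M * x) ≤ B₁ + 1 / (m * y)) : y ≤ (2 * M / m + 2 * M * B₁ * r) * x := by
  have hMx : 0 < M * x := by positivity
  have hmy : 0 < m * y := by positivity
  rcases le_or_gt x (1 / (2 * M * B₁)) with hc | hc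
  · have hc1 : x * (2 * M * B₁) ≤ 1 := (le_div_iff₀ (by positivity)).1 hc
    have hB2 : B₁ ≤ 1 / (2 * (M * x)) := by
      rw [le_div_iff₀ (by positivity)]; nlinarith
    have hhalf : 1 / (2 * (M * x)) ≤ 1 / (m * y) := by
      have heq : 1 / (M * x) = 1 / (2 * (M * x)) + 1 / (2 * (M * x)) := by
        rw [← add_div, eq_div_iff (by positivity)]
        field_simp
        ring
      linarith
    have hle : m * y ≤ 2 * (M * x) := le_of_one_div_le_one_div (by positivity) hhalf
    have : y ≤ 2 * M / m * x := by
      rw [div_mul_eq_mul_div, le_div_iff₀ hm]; nlinarith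
    nlinarith [mul_pos (mul_pos (mul_pos two_pos hM) hB) hr]
  · have hc1 : 1 < x * (2 * M * B₁) := by
      rw [div_lt_iff₀ (by positivity)] at hc; linarith
    have : y ≤ r * (x * (2 * M * B₁)) := by nlinarith
    nlinarith [mul_pos (div_pos (mul_pos two_pos hM) hm) hx]

lemma w_re_im (γ : ℂ) : (2 * (π:ℂ) * Complex.I * γ).re = -(2 * π * γ.im) ∧
    (2 * (π:ℂ) * Complex.I * γ).im = 2 * π * γ.re := by
  constructor <;> simp [Complex.mul_re, Complex.mul_im]

lemma w_abs (γ : ℂ) : ‖2 * (π:ℂ) * Complex.I * γ‖ = 2 * π * ‖γ‖ := by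
  simp [abs_of_pos Real.pi_pos]


set_option maxHeartbeats 1000000 in
/-- If `α` lies in the sector `0 < |α| ≤ 1/2`, `|Re α| ≥ |Im α|`, and `β ≠ 0`
lies in the strip `Re β ∈ [-1/2, 1/2]`, `|Im β| ≤ K`, and the index bound
`|1/(1 - e^{2πiα}) + 1/(1 - e^{2πiβ})| ≤ B₁` holds, then `|α|` and `|β|` are
comparable: `|α|/B₄ ≤ |β| ≤ B₄|α|` for some `B₄` depending only on `B₁, K`. -/
theorem rotation_numbers_comparable (B₁ K : ℝ) (hB₁ : 0 < B₁) (hK : 0 < K) :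
    ∃ B₄ : ℝ, 1 ≤ B₄ ∧
      ∀ α β : ℂ,
        0 < ‖α‖ → ‖α‖ ≤ 1 / 2 → |α.im| ≤ |α.re| →
        β ≠ 0 → β.re ∈ Set.Icc (-(1 / 2) : ℝ) (1 / 2) → |β.im| ≤ K →
        ‖1 / (1 - Complex.exp (2 * ↑π * Complex.I * α)) +
            1 / (1 - Complex.exp (2 * ↑π * Complex.I * β))‖ ≤ B₁ →
        ‖α‖ / B₄ ≤ ‖β‖ ∧ ‖β‖ ≤ B₄ * ‖α‖ := by
  have hπ : 0 < π := Real.pi_pos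
  set L : ℝ := 2 * π * (K + 1) with hLdef
  have hL : 0 ≤ L := by positivity
  set c : ℝ := Real.exp (-L) * (2 / π) * (2 * π) with hcdef
  set C : ℝ := Real.exp L * (2 * π) with hCdef
  have hc : 0 < c := by positivity
  have hC : 0 < C := by positivity
  set B₄ : ℝ := 1 + (2 * C / c + 2 * C * B₁ * (K + 1)) with hB4def
  have hB4 : 1 ≤ B₄ := by
    have h : 0 < 2 * C / c + 2 * C * B₁ * (K + 1) := by positivity
    rw [hB4def]; linarith
  refine ⟨B₄, hB4, fun α β hα0 hα12 hαsec hβ0 hβre hβim hidx => ⟨?_, ?_⟩⟩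
  all_goals {
  have hβ0' : 0 < ‖β‖ := norm_pos_iff.mpr hβ0
  -- bounds on the two denominators
  have hαre : |α.re| ≤ ‖α‖ := Complex.abs_re_le_norm α
  have hβreb : |β.re| ≤ 1 / 2 := abs_le.2 ⟨by linarith [hβre.1], hβre.2⟩
  have boundsα : c * ‖α‖ ≤ ‖1 - Complex.exp (2 * ↑π * Complex.I * α)‖ ∧
      ‖1 - Complex.exp (2 * ↑π * Complex.I * α)‖ ≤ C * ‖α‖ := by
    obtain ⟨hre, him⟩ := w_re_im α
    have hx : |(2 * (π:ℂ) * Complex.I * α).re| ≤ L := by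
      rw [hre, abs_neg, abs_mul, abs_of_pos (by positivity : (0:ℝ) < 2 * π)]
      have : |α.im| ≤ 1 / 2 := le_trans hαsec (le_trans hαre hα12)
      rw [hLdef]; nlinarith
    have hy : |(2 * (π:ℂ) * Complex.I * α).im| ≤ π := by
      rw [him, abs_mul, abs_of_pos (by positivity : (0:ℝ) < 2 * π)]
      have : |α.re| ≤ 1 / 2 := le_trans hαre hα12
      nlinarith
    have h1 := one_sub_exp_lower hL hx hy
    have h2 := one_sub_exp_upper hL hx
    rw [w_abs α] at h1 h2
    constructor
    · calc c * ‖α‖ = Real.exp (-L) * (2 / π) * (2 * π * ‖α‖) := by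
            rw [hcdef]; ring
        _ ≤ _ := h1
    · calc ‖1 - Complex.exp (2 * ↑π * Complex.I * α)‖
          ≤ Real.exp L * (2 * π * ‖α‖) := h2
        _ = C * ‖α‖ := by rw [hCdef]; ring
  have boundsβ : c * ‖β‖ ≤ ‖1 - Complex.exp (2 * ↑π * Complex.I * β)‖ ∧
      ‖1 - Complex.exp (2 * ↑π * Complex.I * β)‖ ≤ C * ‖β‖ := by
    obtain ⟨hre, him⟩ := w_re_im β
    have hx : |(2 * (π:ℂ) * Complex.I * β).re| ≤ L := by
      rw [hre, abs_neg, abs_mul, abs_of_pos (by positivity : (0:ℝ) < 2 * π)]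
      rw [hLdef]; nlinarith [abs_nonneg β.im]
    have hy : |(2 * (π:ℂ) * Complex.I * β).im| ≤ π := by
      rw [him, abs_mul, abs_of_pos (by positivity : (0:ℝ) < 2 * π)]
      nlinarith
    have h1 := one_sub_exp_lower hL hx hy
    have h2 := one_sub_exp_upper hL hx
    rw [w_abs β] at h1 h2
    constructor
    · calc c * ‖β‖ = Real.exp (-L) * (2 / π) * (2 * π * ‖β‖) := by
            rw [hcdef]; ring
        _ ≤ _ := h1
    · calc ‖1 - Complex.exp (2 * ↑π * Complex.I * β)‖
          ≤ Real.exp L * (2 * π * ‖β‖) := h2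
        _ = C * ‖β‖ := by rw [hCdef]; ring
  set Dα := ‖1 - Complex.exp (2 * ↑π * Complex.I * α)‖
  set Dβ := ‖1 - Complex.exp (2 * ↑π * Complex.I * β)‖
  have hDα : 0 < Dα := lt_of_lt_of_le (by positivity) boundsα.1
  have hDβ : 0 < Dβ := lt_of_lt_of_le (by positivity) boundsβ.1
  set u := 1 / (1 - Complex.exp (2 * ↑π * Complex.I * α)) with hu
  set v := 1 / (1 - Complex.exp (2 * ↑π * Complex.I * β)) with hv
  have hau : ‖u‖ = 1 / Dα := by rw [hu, norm_div, norm_one]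
  have hav : ‖v‖ = 1 / Dβ := by rw [hv, norm_div, norm_one]
  -- triangle inequalities
  have htri1 : ‖u‖ ≤ B₁ + ‖v‖ := by
    have : ‖u‖ = ‖u + v + -v‖ := by rw [add_neg_cancel_right]
    rw [this]
    calc ‖u + v + -v‖ ≤ ‖u + v‖ + ‖-v‖ :=
          norm_add_le _ _
      _ = ‖u + v‖ + ‖v‖ := by rw [norm_neg]
      _ ≤ B₁ + ‖v‖ := by linarith [hidx]
  have htri2 : ‖v‖ ≤ B₁ + ‖u‖ := by
    have : ‖v‖ = ‖u + v + -u‖ := by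
      rw [add_comm u v, add_neg_cancel_right]
    rw [this]
    calc ‖u + v + -u‖ ≤ ‖u + v‖ + ‖-u‖ :=
          norm_add_le _ _
      _ = ‖u + v‖ + ‖u‖ := by rw [norm_neg]
      _ ≤ B₁ + ‖u‖ := by linarith [hidx]
  -- size bounds
  have hβK : ‖β‖ ≤ K + 1 := by
    apply sq_le_of_le_of_nonneg (norm_nonneg _) (by positivity)
    rw [abs_w_sq]
    nlinarith [abs_nonneg β.im, abs_nonneg β.re, sq_abs β.im, sq_abs β.re]
  have hαK : ‖α‖ ≤ K + 1 := by linarith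
  -- the two comparison inequalities
  have key1 : ‖β‖ ≤ (2 * C / c + 2 * C * B₁ * (K + 1)) * ‖α‖ := by
    apply comp_aux hc hC hB₁ hα0 hβ0' hβK (by positivity)
    calc 1 / (C * ‖α‖) ≤ 1 / Dα :=
          one_div_le_one_div_of_le hDα boundsα.2
      _ = ‖u‖ := hau.symm
      _ ≤ B₁ + ‖v‖ := htri1
      _ = B₁ + 1 / Dβ := by rw [hav]
      _ ≤ B₁ + 1 / (c * ‖β‖) := by
          have := one_div_le_one_div_of_le (by positivity) boundsβ.1
          linarith
  have key2 : ‖α‖ ≤ (2 * C / c + 2 * C * B₁ * (K + 1)) * ‖β‖ := by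
    apply comp_aux hc hC hB₁ hβ0' hα0 hαK (by positivity)
    calc 1 / (C * ‖β‖) ≤ 1 / Dβ :=
          one_div_le_one_div_of_le hDβ boundsβ.2
      _ = ‖v‖ := hav.symm
      _ ≤ B₁ + ‖u‖ := htri2
      _ = B₁ + 1 / Dα := by rw [hau]
      _ ≤ B₁ + 1 / (c * ‖α‖) := by
          have := one_div_le_one_div_of_le (by positivity) boundsα.1
          linarith
  first
  | -- lower bound
    (rw [div_le_iff₀ (by linarith : (0:ℝ) < B₄)]
     calc ‖α‖ ≤ (2 * C / c + 2 * C * B₁ * (K + 1)) * ‖β‖ := key2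
       _ ≤ B₄ * ‖β‖ := by
           apply mul_le_mul_of_nonneg_right _ (norm_nonneg β)
           rw [hB4def]; linarith
       _ = ‖β‖ * B₄ := by ring)
  | -- upper bound
    (calc ‖β‖ ≤ (2 * C / c + 2 * C * B₁ * (K + 1)) * ‖α‖ := key1
      _ ≤ B₄ * ‖α‖ := by
          apply mul_le_mul_of_nonneg_right _ (norm_nonneg α)
          rw [hB4def]; linarith)
  }
end
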